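/- arXiv:1511.00496 — 6 statements merged into one kernel-verified Lean document; each statement's English description precedes it below -/
import Mathlib

section
/- Let P be a finite poset. Define two operators on the set of antichains of P: 𝔛(A) = the set of minimal elements of P ∖ ↓A, where ↓A is the lower set generated by A, and 𝔛′(A) = the set of maximal elements of P ∖ ↑A, where ↑A is the upper set generated by A. Then 𝔛 and 𝔛′ are mutually inverse bijections on the set of antichains of P; that is, 𝔛′(𝔛(A)) = A and 𝔛(𝔛′(A)) = A for every antichain A of P. -/
/-- The lower set generated by a subset `A` of a poset. -/
def lowerGen {P : Type*} [PartialOrder P] (A : Set P) : Set P :=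
  {x | ∃ a ∈ A, x ≤ a}

/-- The upper set generated by a subset `A` of a poset. -/
def upperGen {P : Type*} [PartialOrder P] (A : Set P) : Set P :=
  {x | ∃ a ∈ A, a ≤ x}

/-- The reverse operator `𝔛`: the set of minimal elements of the complement of
the lower set generated by `A`. -/
def Xop {P : Type*} [PartialOrder P] (A : Set P) : Set P :=
  {y | Minimal (fun z => z ∈ (lowerGen A)ᶜ) y}

/-- The reverse operator `𝔛′`: the set of maximal elements of the complement of
the upper set generated by `A`. -/
def Xop' {P : Type*} [PartialOrder P] (A : Set P) : Set P :=
  {y | Maximal (fun z => z ∈ (upperGen A)ᶜ) y}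

lemma key {P : Type*} [Finite P] [PartialOrder P] (A : Set P)
    (hA : IsAntichain (· ≤ ·) A) : Xop' (Xop A) = A := by
  have hU : upperGen (Xop A) = (lowerGen A)ᶜ := by
    ext x
    constructor
    · rintro ⟨a, ha, hax⟩ hx
      exact ha.prop ⟨(hx.choose : P), hx.choose_spec.1, hax.trans hx.choose_spec.2⟩
    · intro hx
      obtain ⟨b, hb, hbmin⟩ := Finite.exists_le_minimal (p := fun z => z ∈ (lowerGen A)ᶜ) hx
      exact ⟨b, hbmin, hb⟩
  have : ∀ x, Maximal (fun z => z ∈ lowerGen A) x ↔ x ∈ A := by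
    intro x
    constructor
    · rintro ⟨⟨a, haA, hxa⟩, hmax⟩
      have : a ≤ x := hmax ⟨a, haA, le_rfl⟩ hxa
      rwa [le_antisymm hxa this]
    · intro hx
      refine ⟨⟨x, hx, le_rfl⟩, ?_⟩
      rintro z ⟨a, haA, hza⟩ hxz
      have hxa : x ≤ a := hxz.trans hza
      rcases eq_or_ne x a with rfl | hne
      · exact hza
      · exact absurd hxa (hA hx haA hne)
  ext x
  rw [← this x]
  show Maximal (fun z => z ∈ (upperGen (Xop A))ᶜ) x ↔ _
  rw [hU, compl_compl]

/-- For a finite poset `P`, the operators `𝔛` and `𝔛′` are mutually inverse on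
the set of antichains of `P`: `𝔛′(𝔛(A)) = A` and `𝔛(𝔛′(A)) = A` for every
antichain `A`. -/
theorem stmt0 {P : Type*} [Fintype P] [PartialOrder P] (A : Set P)
    (hA : IsAntichain (· ≤ ·) A) :
    Xop' (Xop A) = A ∧ Xop (Xop' A) = A := by
  refine ⟨key A hA, ?_⟩
  have := key (P := Pᵒᵈ) (A.preimage OrderDual.ofDual) ?_
  · exact this
  · exact fun a ha b hb hne => hA hb ha hne.symm
end

section
/- Let n ≥ 2 and let K_{n−1} be the poset [n−1] ⊕ ([1] ⊔ [1]) ⊕ [n−1] with rank-level lower sets L_0, …, L_{2n−1} and the two extra lower sets I_n and I_{n′}. Fix m ≥ 1, n_0 ∈ ℕ, n_1, …, n_s ∈ ℙ, m_0, …, m_t ∈ ℙ with n_0 + ⋯ + n_s + m_0 + ⋯ + m_t = m, and indices 0 ≤ j_t < ⋯ < j_1 < n ≤ i_s < ⋯ < i_1 < 2n−1. Then the reverse operator 𝔛 of [m] × K_{n−1} satisfies: 𝔛(L_{2n−1}^{n_0}, L_{i_1}^{n_1}, …, L_{i_s}^{n_s}, I_n^{m_0}, L_{j_1}^{m_1},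 …, L_{j_t}^{m_t}) equals (L_{i_1+1}^{n_0+1}, L_{i_2+1}^{n_1}, …, L_{i_s+1}^{n_{s−1}}, I_{n′}^{n_s}, L_{j_1+1}^{m_0}, L_{j_2+1}^{m_1}, …, L_{j_t+1}^{m_{t−1}}, L_0^{m_t−1}) if j_1 < n−1, and equals (L_{i_1+1}^{n_0+1}, L_{i_2+1}^{n_1}, …, L_{i_s+1}^{n_{s−1}}, L_n^{n_s}, I_n^{m_0}, L_{j_2+1}^{m_1}, …, L_{j_t+1}^{m_{t−1}}, L_0^{m_t−1}) if j_1 = n−1. -/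
/-- The reverse operator `𝔛` on lower sets of a poset: the lower set generated by
the minimal elements of the complement. -/
def XRev {α : Type*} [PartialOrder α] (I : Set α) : Set α :=
  {x | ∃ y, Minimal (fun z => z ∈ Iᶜ) y ∧ x ≤ y}

/-- The poset `K_{n-1} = [n-1] ⊕ ([1] ⊔ [1]) ⊕ [n-1]`, realized as pairs
`(rank, tag)` with `1 ≤ rank ≤ 2n-1`, where only rank `n` carries two elements
(tags `false` for `n` and `true` for `n′`). -/
def KType (n : ℕ) : Type :=
  {p : ℕ × Bool // 1 ≤ p.1 ∧ p.1 ≤ 2 * n - 1 ∧ (p.1 ≠ n → p.2 = false)}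

/-- In `K_{n-1}`, `x ≤ y` iff `x = y` or `x` has strictly smaller rank. -/
instance (n : ℕ) : PartialOrder (KType n) where
  le x y := x = y ∨ x.1.1 < y.1.1
  le_refl x := Or.inl rfl
  le_trans x y z hxy hyz := by
    rcases hxy with rfl | h
    · exact hyz
    · rcases hyz with rfl | h'
      · exact Or.inr h
      · exact Or.inr (h.trans h')
  le_antisymm x y hxy hyx := by
    rcases hxy with rfl | h
    · rfl
    · rcases hyx with rfl | h'
      · rfl
      · omega

/-- The rank-level lower set `L_j` of `K_{n-1}`. -/
def KL (n : ℕ) (j : ℕ) : Set (KType n) := {x | x.1.1 ≤ j}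

/-- The lower set `I_n = {1, …, n-1, n}` of `K_{n-1}`. -/
def KIn (n : ℕ) : Set (KType n) := {x | x.1.1 < n ∨ x.1 = (n, false)}

/-- The lower set `I_{n′} = {1, …, n-1, n′}` of `K_{n-1}`. -/
def KIn' (n : ℕ) : Set (KType n) := {x | x.1.1 < n ∨ x.1 = (n, true)}


namespace Stmt4Aux

def evalB {α : Type*} : List (ℕ × Set α) → ℕ → Set α
  | [], _ => ∅
  | (c, S) :: bs, a => if a < c then S else evalB bs (a - c)

lemma evalB_cons {α : Type*} (c : ℕ) (S : Set α) (bs : List (ℕ × Set α)) (a : ℕ) :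
    evalB ((c, S) :: bs) a = if a < c then S else evalB bs (a - c) := rfl

lemma getD_flatMap {α : Type*} (bs : List (ℕ × Set α)) (a : ℕ) :
    (bs.flatMap fun b => List.replicate b.1 b.2).getD a ∅ = evalB bs a := by
  induction bs generalizing a with
  | nil => simp [evalB]
  | cons b bs ih =>
    obtain ⟨c, S⟩ := b
    simp only [List.flatMap_cons, evalB_cons]
    by_cases h : a < c
    · rw [if_pos h, List.getD_append _ _ _ _ (by simpa using h)]
      simp [List.getD_eq_getElem?_getD, h]
    · rw [if_neg h, List.getD_append_right _ _ _ _ (by simpa using Nat.le_of_not_lt h)]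
      simpa using ih (a - c)

lemma evalB_range_ge {α : Type*} (f : ℕ → ℕ × Set α) (s : ℕ) (rest : List (ℕ × Set α))
    (a : ℕ) (h : ∑ k ∈ Finset.range s, (f k).1 ≤ a) :
    evalB ((List.range s).map f ++ rest) a
      = evalB rest (a - ∑ k ∈ Finset.range s, (f k).1) := by
  induction s generalizing f a with
  | zero => simp
  | succ s ih =>
    rw [List.range_succ_eq_map, List.map_cons, List.map_map, List.cons_append, evalB_cons]
    have hs : ∑ k ∈ Finset.range (s + 1), (f k).1
        = ∑ k ∈ Finset.range s, (f (k + 1)).1 + (f 0).1 := Finset.sum_range_succ' _ s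
    rw [if_neg (by omega)]
    have h2 := ih (f ∘ Nat.succ) (a - (f 0).1)
      (by simp only [Function.comp, Nat.succ_eq_add_one]; omega)
    simp only [Function.comp, Nat.succ_eq_add_one] at h2
    rw [h2, show a - (f 0).1 - ∑ x ∈ Finset.range s, (f (x + 1)).1
        = a - ∑ k ∈ Finset.range (s + 1), (f k).1 from by omega]

lemma evalB_range_lt {α : Type*} (f : ℕ → ℕ × Set α) (s k : ℕ) (rest : List (ℕ × Set α))
    (a : ℕ) (hk : k < s) (h1 : ∑ j ∈ Finset.range k, (f j).1 ≤ a)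
    (h2 : a < ∑ j ∈ Finset.range (k + 1), (f j).1) :
    evalB ((List.range s).map f ++ rest) a = (f k).2 := by
  induction s generalizing f k a with
  | zero => omega
  | succ s ih =>
    rw [List.range_succ_eq_map, List.map_cons, List.map_map, List.cons_append, evalB_cons]
    cases k with
    | zero =>
      have e0 : ∑ j ∈ Finset.range (0 + 1), (f j).1 = (f 0).1 := by
        rw [Finset.sum_range_succ]; simp
      rw [if_pos (by omega)]
    | succ k =>
      have e1 : ∑ j ∈ Finset.range (k + 1), (f j).1
          = ∑ j ∈ Finset.range k, (f (j + 1)).1 + (f 0).1 := Finset.sum_range_succ' _ k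
      have e2 : ∑ j ∈ Finset.range (k + 1 + 1), (f j).1
          = ∑ j ∈ Finset.range (k + 1), (f (j + 1)).1 + (f 0).1 := Finset.sum_range_succ' _ (k + 1)
      have hf0 : ∑ j ∈ Finset.range k, (f (j+1)).1 ≤ ∑ j ∈ Finset.range (k+1), (f (j+1)).1 :=
        Finset.sum_le_sum_of_subset (Finset.range_subset_range.2 (by omega))
      rw [if_neg (by omega)]
      have h3 := ih (f ∘ Nat.succ) k (a - (f 0).1) (by omega)
        (by simp only [Function.comp, Nat.succ_eq_add_one]; omega)
        (by simp only [Function.comp, Nat.succ_eq_add_one]; omega)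
      simp only [Function.comp, Nat.succ_eq_add_one] at h3
      rw [h3]

lemma find_block (c : ℕ → ℕ) (s a : ℕ) (h : a < ∑ j ∈ Finset.range s, c j) :
    ∃ k < s, ∑ j ∈ Finset.range k, c j ≤ a ∧ a < ∑ j ∈ Finset.range (k + 1), c j := by
  induction s with
  | zero => simp at h
  | succ s ih =>
    by_cases h' : a < ∑ j ∈ Finset.range s, c j
    · obtain ⟨k, hk, h1, h2⟩ := ih h'
      exact ⟨k, by omega, h1, h2⟩
    · exact ⟨s, by omega, by omega, h⟩

lemma K_le_def {n : ℕ} (x y : KType n) : x ≤ y ↔ (x = y ∨ x.1.1 < y.1.1) := Iff.rfl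

lemma K_le_rank {n : ℕ} {x y : KType n} (h : x ≤ y) : x.1.1 ≤ y.1.1 := by
  rcases h with rfl | h <;> omega

lemma K_ext {n : ℕ} {x y : KType n} (h : x.1 = y.1) : x = y := Subtype.ext h

lemma K_eq_of_rank_eq {n : ℕ} {x y : KType n} (hne : x.1.1 ≠ n) (h : x.1.1 = y.1.1) :
    x = y := by
  apply K_ext
  have hx := x.2.2.2 hne
  have hy := y.2.2.2 (by omega)
  have : x.1.2 = y.1.2 := by rw [hx, hy]
  exact Prod.ext h this

lemma K_le_iff_of_ne {n : ℕ} {x y : KType n} (hy : y.1.1 ≠ n) : x ≤ y ↔ x.1.1 ≤ y.1.1 := by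
  rw [K_le_def]
  constructor
  · rintro (rfl | h) <;> omega
  · intro h
    rcases Nat.lt_or_ge x.1.1 y.1.1 with h' | h'
    · exact Or.inr h'
    · exact Or.inl (K_eq_of_rank_eq (by omega) (by omega))

lemma minK_KL {n : ℕ} (hn : 2 ≤ n) (j : ℕ) (y : KType n) :
    (y ∉ KL n j ∧ ∀ y', y' ≤ y → y' ∉ KL n j → y ≤ y') ↔ y.1.1 = j + 1 := by
  constructor
  · rintro ⟨h1, h2⟩
    simp only [KL, Set.mem_setOf_eq, not_le] at h1
    by_contra hne
    have hrank : j + 1 < y.1.1 := by omega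
    have hy2 : y.1.1 ≤ 2 * n - 1 := y.2.2.1
    have hele : 1 ≤ j + 1 ∧ j + 1 ≤ 2 * n - 1 ∧ ((j : ℕ) + 1 ≠ n → false = false) :=
      ⟨by omega, by omega, fun _ => rfl⟩
    set y' : KType n := ⟨(j + 1, false), hele⟩ with hy'
    have hle : y' ≤ y := Or.inr (by simpa using hrank)
    have hnot : y' ∉ KL n j := fun h => by have h' : j + 1 ≤ j := h; omega
    have := h2 y' hle hnot
    have := K_le_rank this
    simp [hy'] at this
    omega
  · intro h
    refine ⟨by simp [KL]; omega, fun y' hle hnot => ?_⟩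
    simp only [KL, Set.mem_setOf_eq, not_le] at hnot
    rcases hle with rfl | hlt
    · exact le_refl _
    · omega

lemma minK_KIn {n : ℕ} (hn : 2 ≤ n) (y : KType n) :
    (y ∉ KIn n ∧ ∀ y', y' ≤ y → y' ∉ KIn n → y ≤ y') ↔ y.1 = (n, true) := by
  constructor
  · rintro ⟨h1, h2⟩
    simp only [KIn, Set.mem_setOf_eq, not_or, not_lt] at h1
    obtain ⟨hge, hne⟩ := h1
    rcases Nat.eq_or_lt_of_le hge with heq | hlt
    · have : y.1.2 = true := by
        by_contra hb
        simp only [Bool.not_eq_true] at hb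
        exact hne (Prod.ext_iff.2 ⟨heq.symm, hb⟩)
      exact Prod.ext heq.symm this
    · exfalso
      set y' : KType n := ⟨(n, true), by omega, by omega, fun h => absurd rfl h⟩ with hy'
      have hle : y' ≤ y := Or.inr (by simpa using hlt)
      have hnot : y' ∉ KIn n := fun h => by
        have h' : n < n ∨ (n, true) = (n, false) := h; simp at h'
      have := K_le_rank (h2 y' hle hnot)
      simp [hy'] at this
      omega
  · intro h
    constructor
    · simp [KIn, h]
    · intro y' hle hnot
      simp only [KIn, Set.mem_setOf_eq, not_or, not_lt] at hnot
      rcases hle with rfl | hlt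
      · exact le_refl _
      · rw [h] at hlt; simp at hlt; omega

lemma minimal_prod {m n : ℕ} (F : ℕ → Set (KType n))
    (hlow : ∀ (a : ℕ) (x y : KType n), x ≤ y → y ∈ F a → x ∈ F a)
    (b : Fin m) (y : KType n) :
    Minimal (fun z => z ∈ ({p : Fin m × KType n | p.2 ∈ F (p.1 : ℕ)})ᶜ) (b, y) ↔
      (y ∉ F (b : ℕ) ∧ (∀ y', y' ≤ y → y' ∉ F (b : ℕ) → y ≤ y') ∧
        ∀ b' : ℕ, b' < (b : ℕ) → y ∈ F b') := by
  rw [minimal_iff]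
  constructor
  · rintro ⟨h1, h2⟩
    refine ⟨h1, fun y' hle hnot => ?_, fun b' hb' => ?_⟩
    · have := h2 (y := (b, y')) hnot (Prod.mk_le_mk.2 ⟨le_refl _, hle⟩)
      rw [Prod.ext_iff] at this
      have h4 : y = y' := this.2
      exact le_of_eq h4
    · by_contra hnot
      have hbm : b' < m := lt_trans hb' b.isLt
      have := h2 (y := (⟨b', hbm⟩, y)) hnot
        (Prod.mk_le_mk.2 ⟨by simp [Fin.le_def]; omega, le_refl _⟩)
      rw [Prod.ext_iff] at this
      have : (b : ℕ) = b' := congrArg Fin.val this.1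
      omega
  · rintro ⟨h1, h2, h3⟩
    refine ⟨h1, ?_⟩
    rintro ⟨b', y'⟩ hmem hle
    rw [Prod.mk_le_mk] at hle
    rcases Nat.lt_or_ge (b' : ℕ) (b : ℕ) with hlt | hge
    · exact absurd (hlow (b' : ℕ) y' y hle.2 (h3 (b' : ℕ) hlt)) hmem
    · have hbb : b = b' := Fin.ext (by have := hle.1; rw [Fin.le_def] at this; omega)
      subst hbb
      have h4 : y' = y := le_antisymm hle.2 (h2 y' hle.2 hmem)
      exact Prod.ext_iff.2 ⟨rfl, h4.symm⟩

end Stmt4Aux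

open Stmt4Aux

/-- Lemma 2.5: the explicit formula for the reverse operator of `[m] × K_{n-1}`
on a lower set of the shape
`(L_{2n-1}^{n₀}, L_{i₁}^{n₁}, …, L_{i_s}^{n_s}, I_n^{m₀}, L_{j₁}^{m₁}, …, L_{j_t}^{m_t})`,
with `n₀ ∈ ℕ`, `n₁,…,n_s,m₀,…,m_t ≥ 1` summing (with `n₀`) to `m`, and
`0 ≤ j_t < ⋯ < j₁ < n ≤ i_s < ⋯ < i₁ < 2n-1`.  Slices are encoded as a list of
lower sets of `K_{n-1}` of length `m`; `ii k = i_{k+1}`, `nn k = n_{k+1}`,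
`jj k = j_{k+1}`, `mm k = m_k` (0-indexed).  If `j₁ < n-1` the image is
`(L_{i₁+1}^{n₀+1}, L_{i₂+1}^{n₁}, …, L_{i_s+1}^{n_{s-1}}, I_{n′}^{n_s},
 L_{j₁+1}^{m₀}, L_{j₂+1}^{m₁}, …, L_{j_t+1}^{m_{t-1}}, L_0^{m_t-1})`,
and if `j₁ = n-1` it is
`(L_{i₁+1}^{n₀+1}, L_{i₂+1}^{n₁}, …, L_{i_s+1}^{n_{s-1}}, L_n^{n_s},
 I_n^{m₀}, L_{j₂+1}^{m₁}, …, L_{j_t+1}^{m_{t-1}}, L_0^{m_t-1})`. -/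
theorem stmt4 (n : ℕ) (hn : 2 ≤ n) (m : ℕ) (hm : 1 ≤ m)
    (s t : ℕ) (hs : 1 ≤ s) (ht : 1 ≤ t)
    (n₀ : ℕ) (nn mm : ℕ → ℕ)
    (hnn : ∀ k, k < s → 1 ≤ nn k) (hmm : ∀ k, k ≤ t → 1 ≤ mm k)
    (ii jj : ℕ → ℕ)
    (hii : ∀ k, k + 1 < s → ii (k + 1) < ii k)
    (hjj : ∀ k, k + 1 < t → jj (k + 1) < jj k)
    (hi1 : ii 0 < 2 * n - 1) (his : n ≤ ii (s - 1)) (hj1 : jj 0 < n)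
    (hsum : n₀ + (∑ k ∈ Finset.range s, nn k) + (∑ k ∈ Finset.range (t + 1), mm k) = m) :
    (jj 0 < n - 1 →
      XRev {p : Fin m × KType n | p.2 ∈
          (List.replicate n₀ (KL n (2 * n - 1)) ++
            ((List.range s).flatMap fun k => List.replicate (nn k) (KL n (ii k))) ++
            List.replicate (mm 0) (KIn n) ++
            ((List.range t).flatMap fun k =>
              List.replicate (mm (k + 1)) (KL n (jj k)))).getD p.1 ∅}
        = {p : Fin m × KType n | p.2 ∈
          (List.replicate (n₀ + 1) (KL n (ii 0 + 1)) ++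
            ((List.range (s - 1)).flatMap fun k =>
              List.replicate (nn k) (KL n (ii (k + 1) + 1))) ++
            List.replicate (nn (s - 1)) (KIn' n) ++
            List.replicate (mm 0) (KL n (jj 0 + 1)) ++
            ((List.range (t - 1)).flatMap fun k =>
              List.replicate (mm (k + 1)) (KL n (jj (k + 1) + 1))) ++
            List.replicate (mm t - 1) (KL n 0)).getD p.1 ∅}) ∧
    (jj 0 = n - 1 →
      XRev {p : Fin m × KType n | p.2 ∈
          (List.replicate n₀ (KL n (2 * n - 1)) ++
            ((List.range s).flatMap fun k => List.replicate (nn k) (KL n (ii k))) ++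
            List.replicate (mm 0) (KIn n) ++
            ((List.range t).flatMap fun k =>
              List.replicate (mm (k + 1)) (KL n (jj k)))).getD p.1 ∅}
        = {p : Fin m × KType n | p.2 ∈
          (List.replicate (n₀ + 1) (KL n (ii 0 + 1)) ++
            ((List.range (s - 1)).flatMap fun k =>
              List.replicate (nn k) (KL n (ii (k + 1) + 1))) ++
            List.replicate (nn (s - 1)) (KL n n) ++
            List.replicate (mm 0) (KIn n) ++
            ((List.range (t - 1)).flatMap fun k =>
              List.replicate (mm (k + 1)) (KL n (jj (k + 1) + 1))) ++
            List.replicate (mm t - 1) (KL n 0)).getD p.1 ∅}) := by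
  classical
  obtain ⟨s', rfl⟩ : ∃ s', s = s' + 1 := ⟨s - 1, by omega⟩
  obtain ⟨t', rfl⟩ : ∃ t', t = t' + 1 := ⟨t - 1, by omega⟩
  simp only [Nat.add_sub_cancel] at his ⊢
  have hmm0 : 1 ≤ mm 0 := hmm 0 (Nat.zero_le _)
  have hmmt : 1 ≤ mm (t' + 1) := hmm (t' + 1) le_rfl
  have hii' : ∀ k' k : ℕ, k' < k → k < s' + 1 → ii k < ii k' := by
    intro k' k h hks
    induction k with
    | zero => omega
    | succ k ihk =>
      rcases Nat.lt_or_ge k' k with h' | h'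
      · exact lt_trans (hii k hks) (ihk h' (by omega))
      · have hk'k : k' = k := by omega
        subst hk'k
        exact hii k' hks
  have hjj' : ∀ k' k : ℕ, k' < k → k < t' + 1 → jj k < jj k' := by
    intro k' k h hks
    induction k with
    | zero => omega
    | succ k ihk =>
      rcases Nat.lt_or_ge k' k with h' | h'
      · exact lt_trans (hjj k hks) (ihk h' (by omega))
      · have hk'k : k' = k := by omega
        subst hk'k
        exact hjj k' hks
  have hii_le : ∀ k' k : ℕ, k' ≤ k → k < s' + 1 → ii k ≤ ii k' := by
    intro k' k h hks
    rcases Nat.eq_or_lt_of_le h with rfl | h'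
    · exact le_rfl
    · exact le_of_lt (hii' k' k h' hks)
  have hjj_le : ∀ k' k : ℕ, k' ≤ k → k < t' + 1 → jj k ≤ jj k' := by
    intro k' k h hks
    rcases Nat.eq_or_lt_of_le h with rfl | h'
    · exact le_rfl
    · exact le_of_lt (hjj' k' k h' hks)
  have hiin : ∀ k, k < s' + 1 → n ≤ ii k := by
    intro k hk
    exact le_trans his (hii_le k s' (by omega) (by omega))
  have hii2n : ∀ k, k < s' + 1 → ii k < 2 * n - 1 := by
    intro k hk
    have := hii_le 0 k (by omega) hk
    omega
  have hjjn : ∀ k, k < t' + 1 → jj k ≤ jj 0 := fun k hk => hjj_le 0 k (Nat.zero_le k) hk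
  have hsumnn : ∀ k, k ≤ s' + 1 → ∀ k', k' ≤ k →
      (∑ j ∈ Finset.range k', nn j) + (k - k') ≤ ∑ j ∈ Finset.range k, nn j := by
    intro k
    induction k with
    | zero =>
      intro _ k' hk'
      have hz : k' = 0 := by omega
      subst hz; simp
    | succ k ihk =>
      intro hk k' hk'
      rcases Nat.eq_or_lt_of_le hk' with heq | h
      · subst heq; omega
      · have h1 := ihk (by omega) k' (by omega)
        have h2 : 1 ≤ nn k := hnn k (by omega)
        have h3 : ∑ j ∈ Finset.range (k + 1), nn j = ∑ j ∈ Finset.range k, nn j + nn k :=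
          Finset.sum_range_succ _ _
        omega
  have hsummm : ∀ k, k ≤ t' + 1 → ∀ k', k' ≤ k →
      (∑ j ∈ Finset.range k', mm (j + 1)) + (k - k') ≤ ∑ j ∈ Finset.range k, mm (j + 1) := by
    intro k
    induction k with
    | zero =>
      intro _ k' hk'
      have hz : k' = 0 := by omega
      subst hz; simp
    | succ k ihk =>
      intro hk k' hk'
      rcases Nat.eq_or_lt_of_le hk' with heq | h
      · subst heq; omega
      · have h1 := ihk (by omega) k' (by omega)
        have h2 : 1 ≤ mm (k + 1) := hmm (k + 1) (by omega)
        have h3 : ∑ j ∈ Finset.range (k + 1), mm (j + 1)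
            = ∑ j ∈ Finset.range k, mm (j + 1) + mm (k + 1) := Finset.sum_range_succ _ _
        omega
  have hsrs : ∑ j ∈ Finset.range (s' + 1), nn j = ∑ j ∈ Finset.range s', nn j + nn s' :=
    Finset.sum_range_succ _ _
  have hsrt : ∑ j ∈ Finset.range (t' + 1), mm (j + 1)
      = ∑ j ∈ Finset.range t', mm (j + 1) + mm (t' + 1) := Finset.sum_range_succ _ _
  have hnns : 1 ≤ nn s' := hnn s' (by omega)
  have hSNpos := hsumnn (s' + 1) le_rfl 0
  have hSMpos := hsummm (t' + 1) le_rfl 0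
  simp only [Finset.sum_range_zero, Nat.zero_add, Nat.sub_zero] at hSNpos hSMpos
  have hm' : n₀ + (∑ j ∈ Finset.range (s' + 1), nn j) + mm 0
      + (∑ j ∈ Finset.range (t' + 1), mm (j + 1)) = m := by
    have h1 : ∑ k ∈ Finset.range (t' + 1 + 1), mm k
        = ∑ k ∈ Finset.range (t' + 1), mm (k + 1) + mm 0 := Finset.sum_range_succ' _ _
    omega
  set BL : List (ℕ × Set (KType n)) :=
    (n₀, KL n (2 * n - 1)) :: (((List.range (s' + 1)).map fun k => (nn k, KL n (ii k))) ++
      ((mm 0, KIn n) :: (((List.range (t' + 1)).map fun k => (mm (k + 1), KL n (jj k))) ++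
        ([] : List (ℕ × Set (KType n)))))) with hBL
  have hgetD : ∀ a : ℕ,
      (List.replicate n₀ (KL n (2 * n - 1)) ++
        ((List.range (s' + 1)).flatMap fun k => List.replicate (nn k) (KL n (ii k))) ++
        List.replicate (mm 0) (KIn n) ++
        ((List.range (t' + 1)).flatMap fun k =>
          List.replicate (mm (k + 1)) (KL n (jj k)))).getD a ∅ = evalB BL a := by
    intro a
    rw [show (List.replicate n₀ (KL n (2 * n - 1)) ++
        ((List.range (s' + 1)).flatMap fun k => List.replicate (nn k) (KL n (ii k))) ++
        List.replicate (mm 0) (KIn n) ++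
        ((List.range (t' + 1)).flatMap fun k =>
          List.replicate (mm (k + 1)) (KL n (jj k))))
        = BL.flatMap (fun b => List.replicate b.1 b.2) from by
      rw [hBL]
      simp [List.flatMap_append, List.flatMap_map, List.append_assoc, Function.comp]]
    exact getD_flatMap BL a
  have hF1 : ∀ a : ℕ, a < n₀ → evalB BL a = KL n (2 * n - 1) := by
    intro a ha
    rw [hBL, evalB_cons, if_pos ha]
  have hF2 : ∀ k, k < s' + 1 → ∀ a : ℕ, n₀ + ∑ j ∈ Finset.range k, nn j ≤ a →
      a < n₀ + ∑ j ∈ Finset.range (k + 1), nn j → evalB BL a = KL n (ii k) := by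
    intro k hk a h1 h2
    rw [hBL, evalB_cons, if_neg (by omega)]
    exact evalB_range_lt (fun k => (nn k, KL n (ii k))) (s' + 1) k _ (a - n₀) hk
      (show ∑ j ∈ Finset.range k, nn j ≤ a - n₀ by omega)
      (show a - n₀ < ∑ j ∈ Finset.range (k + 1), nn j by omega)
  have hF3 : ∀ a : ℕ, n₀ + ∑ j ∈ Finset.range (s' + 1), nn j ≤ a →
      a < n₀ + ∑ j ∈ Finset.range (s' + 1), nn j + mm 0 → evalB BL a = KIn n := by
    intro a h1 h2
    rw [hBL, evalB_cons, if_neg (by omega)]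
    rw [evalB_range_ge (fun k => (nn k, KL n (ii k))) (s' + 1) _ (a - n₀)
      (show ∑ j ∈ Finset.range (s' + 1), nn j ≤ a - n₀ by omega)]
    rw [evalB_cons,
      if_pos (show a - n₀ - ∑ k ∈ Finset.range (s' + 1), nn k < mm 0 by omega)]
  have hF4 : ∀ k, k < t' + 1 → ∀ a : ℕ,
      n₀ + (∑ j ∈ Finset.range (s' + 1), nn j) + mm 0 + ∑ j ∈ Finset.range k, mm (j + 1) ≤ a →
      a < n₀ + (∑ j ∈ Finset.range (s' + 1), nn j) + mm 0
        + ∑ j ∈ Finset.range (k + 1), mm (j + 1) →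
      evalB BL a = KL n (jj k) := by
    intro k hk a h1 h2
    rw [hBL, evalB_cons, if_neg (by omega)]
    rw [evalB_range_ge (fun k => (nn k, KL n (ii k))) (s' + 1) _ (a - n₀)
      (show ∑ j ∈ Finset.range (s' + 1), nn j ≤ a - n₀ by omega)]
    rw [evalB_cons,
      if_neg (show ¬(a - n₀ - ∑ k ∈ Finset.range (s' + 1), nn k < mm 0) by omega)]
    exact evalB_range_lt (fun k => (mm (k + 1), KL n (jj k))) (t' + 1) k _
      (a - n₀ - (∑ k ∈ Finset.range (s' + 1), nn k) - mm 0) hk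
      (show ∑ j ∈ Finset.range k, mm (j + 1)
        ≤ a - n₀ - (∑ k ∈ Finset.range (s' + 1), nn k) - mm 0 by omega)
      (show a - n₀ - (∑ k ∈ Finset.range (s' + 1), nn k) - mm 0
        < ∑ j ∈ Finset.range (k + 1), mm (j + 1) by omega)
  have hF5 : ∀ a : ℕ, n₀ + (∑ j ∈ Finset.range (s' + 1), nn j) + mm 0
      + (∑ j ∈ Finset.range (t' + 1), mm (j + 1)) ≤ a → evalB BL a = ∅ := by
    intro a h
    rw [hBL, evalB_cons, if_neg (by omega)]
    rw [evalB_range_ge (fun k => (nn k, KL n (ii k))) (s' + 1) _ (a - n₀)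
      (show ∑ j ∈ Finset.range (s' + 1), nn j ≤ a - n₀ by omega)]
    rw [evalB_cons,
      if_neg (show ¬(a - n₀ - ∑ k ∈ Finset.range (s' + 1), nn k < mm 0) by omega)]
    rw [evalB_range_ge (fun k => (mm (k + 1), KL n (jj k))) (t' + 1) _
      (a - n₀ - (∑ k ∈ Finset.range (s' + 1), nn k) - mm 0)
      (show ∑ j ∈ Finset.range (t' + 1), mm (j + 1)
        ≤ a - n₀ - (∑ k ∈ Finset.range (s' + 1), nn k) - mm 0 by omega)]
    rfl
  have hregion : ∀ a : ℕ, a < n₀ ∨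
      (∃ k < s' + 1, n₀ + ∑ j ∈ Finset.range k, nn j ≤ a ∧
        a < n₀ + ∑ j ∈ Finset.range (k + 1), nn j) ∨
      (n₀ + ∑ j ∈ Finset.range (s' + 1), nn j ≤ a ∧
        a < n₀ + ∑ j ∈ Finset.range (s' + 1), nn j + mm 0) ∨
      (∃ k < t' + 1,
        n₀ + (∑ j ∈ Finset.range (s' + 1), nn j) + mm 0 + ∑ j ∈ Finset.range k, mm (j + 1) ≤ a ∧
        a < n₀ + (∑ j ∈ Finset.range (s' + 1), nn j) + mm 0
          + ∑ j ∈ Finset.range (k + 1), mm (j + 1)) ∨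
      n₀ + (∑ j ∈ Finset.range (s' + 1), nn j) + mm 0
        + (∑ j ∈ Finset.range (t' + 1), mm (j + 1)) ≤ a := by
    intro a
    rcases Nat.lt_or_ge a n₀ with h | h
    · exact Or.inl h
    rcases Nat.lt_or_ge a (n₀ + ∑ j ∈ Finset.range (s' + 1), nn j) with h2 | h2
    · obtain ⟨k, hk, hb1, hb2⟩ := find_block nn (s' + 1) (a - n₀) (by omega)
      have hb1' : ∑ j ∈ Finset.range k, nn j ≤ a - n₀ := hb1
      have hb2' : a - n₀ < ∑ j ∈ Finset.range (k + 1), nn j := hb2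
      exact Or.inr (Or.inl ⟨k, hk, by omega, by omega⟩)
    rcases Nat.lt_or_ge a (n₀ + ∑ j ∈ Finset.range (s' + 1), nn j + mm 0) with h3 | h3
    · exact Or.inr (Or.inr (Or.inl ⟨h2, h3⟩))
    rcases Nat.lt_or_ge a (n₀ + (∑ j ∈ Finset.range (s' + 1), nn j) + mm 0
        + (∑ j ∈ Finset.range (t' + 1), mm (j + 1))) with h4 | h4
    · obtain ⟨k, hk, hb1, hb2⟩ := find_block (fun j => mm (j + 1)) (t' + 1)
        (a - (n₀ + (∑ j ∈ Finset.range (s' + 1), nn j) + mm 0))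
        (show a - (n₀ + (∑ j ∈ Finset.range (s' + 1), nn j) + mm 0)
          < ∑ j ∈ Finset.range (t' + 1), mm (j + 1) by omega)
      have hb1' : ∑ j ∈ Finset.range k, mm (j + 1)
          ≤ a - (n₀ + (∑ j ∈ Finset.range (s' + 1), nn j) + mm 0) := hb1
      have hb2' : a - (n₀ + (∑ j ∈ Finset.range (s' + 1), nn j) + mm 0)
          < ∑ j ∈ Finset.range (k + 1), mm (j + 1) := hb2
      exact Or.inr (Or.inr (Or.inr (Or.inl ⟨k, hk, by omega, by omega⟩)))
    · exact Or.inr (Or.inr (Or.inr (Or.inr h4)))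
  have hlow : ∀ (a : ℕ) (x y : KType n), x ≤ y → y ∈ evalB BL a → x ∈ evalB BL a := by
    intro a x y hxy hy
    have hrank := K_le_rank hxy
    rcases hregion a with h | ⟨k, hk, h1, h2⟩ | ⟨h1, h2⟩ | ⟨k, hk, h1, h2⟩ | h
    · rw [hF1 a h] at hy ⊢
      exact x.2.2.1
    · rw [hF2 k hk a h1 h2] at hy ⊢
      have hy' : y.1.1 ≤ ii k := hy
      show x.1.1 ≤ ii k
      omega
    · rw [hF3 a h1 h2] at hy ⊢
      rcases hxy with rfl | hlt
      · exact hy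
      · have hy' : y.1.1 < n ∨ y.1 = (n, false) := hy
        refine Or.inl ?_
        rcases hy' with h' | h'
        · omega
        · have : y.1.1 = n := by rw [h']
          omega
    · rw [hF4 k hk a h1 h2] at hy ⊢
      have hy' : y.1.1 ≤ jj k := hy
      show x.1.1 ≤ jj k
      omega
    · rw [hF5 a h] at hy
      exact absurd hy (Set.notMem_empty y)
  have hmin : ∀ (b : Fin m) (y : KType n),
      (y ∉ evalB BL (b : ℕ) ∧ (∀ y', y' ≤ y → y' ∉ evalB BL (b : ℕ) → y ≤ y') ∧
        ∀ b' : ℕ, b' < (b : ℕ) → y ∈ evalB BL b') ↔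
      ((∃ k < s' + 1, (b : ℕ) = n₀ + ∑ j ∈ Finset.range k, nn j ∧ y.1.1 = ii k + 1) ∨
       ((b : ℕ) = n₀ + ∑ j ∈ Finset.range (s' + 1), nn j ∧ y.1 = (n, true)) ∨
       (∃ k < t' + 1, (b : ℕ) = n₀ + (∑ j ∈ Finset.range (s' + 1), nn j) + mm 0
          + ∑ j ∈ Finset.range k, mm (j + 1) ∧
          y.1.1 = jj k + 1 ∧ y.1 ≠ (n, true))) := by
    intro b y
    have hanti : ∀ a b : ℕ, a ≤ b → y ∈ evalB BL b → y ∈ evalB BL a := by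
      intro a b hab hy
      induction b with
      | zero =>
        have : a = 0 := by omega
        subst this; exact hy
      | succ b ihb =>
        rcases Nat.eq_or_lt_of_le hab with rfl | h
        · exact hy
        · refine ihb (by omega) ?_
          clear ihb hab h a
          rcases hregion (b + 1) with h | ⟨k, hk, h1, h2⟩ | ⟨h1, h2⟩ | ⟨k, hk, h1, h2⟩ | h
          · rw [hF1 _ (by omega)]
            exact y.2.2.1
          · rw [hF2 k hk (b + 1) h1 h2] at hy
            have hy' : y.1.1 ≤ ii k := hy
            rcases Nat.eq_or_lt_of_le h1 with heq | hlt
            · -- b + 1 is the start of block k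
              cases k with
              | zero =>
                rw [hF1 _ (by have := Finset.sum_range_zero nn; omega)]
                exact y.2.2.1
              | succ k =>
                have hs1 : ∑ j ∈ Finset.range (k + 1), nn j
                    = ∑ j ∈ Finset.range k, nn j + nn k := Finset.sum_range_succ _ _
                have hnk : 1 ≤ nn k := hnn k (by omega)
                rw [hF2 k (by omega) b (by omega) (by omega)]
                have := hii' k (k + 1) (by omega) hk
                show y.1.1 ≤ ii k
                omega
            · rw [hF2 k hk b (by omega) (by omega)]
              exact hy'
          · rw [hF3 (b + 1) h1 h2] at hy
            rcases Nat.eq_or_lt_of_le h1 with heq | hlt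
            · rw [hF2 s' (by omega) b (by omega) (by omega)]
              have hy' : y.1.1 < n ∨ y.1 = (n, false) := hy
              show y.1.1 ≤ ii s'
              rcases hy' with h' | h'
              · omega
              · have : y.1.1 = n := by rw [h']
                omega
            · rw [hF3 b (by omega) (by omega)]
              exact hy
          · rw [hF4 k hk (b + 1) h1 h2] at hy
            have hy' : y.1.1 ≤ jj k := hy
            rcases Nat.eq_or_lt_of_le h1 with heq | hlt
            · cases k with
              | zero =>
                have hz : ∑ j ∈ Finset.range 0, mm (j + 1) = 0 := Finset.sum_range_zero _
                rw [hF3 b (by omega) (by omega)]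
                show y.1.1 < n ∨ y.1 = (n, false)
                exact Or.inl (by have := hj1; omega)
              | succ k =>
                have hs1 : ∑ j ∈ Finset.range (k + 1), mm (j + 1)
                    = ∑ j ∈ Finset.range k, mm (j + 1) + mm (k + 1) := Finset.sum_range_succ _ _
                have hmk : 1 ≤ mm (k + 1) := hmm (k + 1) (by omega)
                rw [hF4 k (by omega) b (by omega) (by omega)]
                have := hjj' k (k + 1) (by omega) hk
                show y.1.1 ≤ jj k
                omega
            · rw [hF4 k hk b (by omega) (by omega)]
              exact hy'
          · rw [hF5 (b + 1) h] at hy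
            exact absurd hy (Set.notMem_empty y)
    constructor
    · rintro ⟨h1, h2, h3⟩
      rcases hregion (b : ℕ) with hb | ⟨k, hk, hb1, hb2⟩ | ⟨hb1, hb2⟩ | ⟨k, hk, hb1, hb2⟩ | hb
      · rw [hF1 _ hb] at h1 h2
        have hr := (minK_KL hn (2 * n - 1) y).1 ⟨h1, h2⟩
        have := y.2.2.1
        omega
      · rw [hF2 k hk _ hb1 hb2] at h1 h2
        have hr := (minK_KL hn (ii k) y).1 ⟨h1, h2⟩
        rcases Nat.eq_or_lt_of_le hb1 with heq | hlt
        · exact Or.inl ⟨k, hk, heq.symm, hr⟩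
        · exfalso
          have hy := h3 ((b : ℕ) - 1) (by omega)
          rw [hF2 k hk _ (by omega) (by omega)] at hy
          have : y.1.1 ≤ ii k := hy
          omega
      · rw [hF3 _ hb1 hb2] at h1 h2
        have hr := (minK_KIn hn y).1 ⟨h1, h2⟩
        rcases Nat.eq_or_lt_of_le hb1 with heq | hlt
        · exact Or.inr (Or.inl ⟨heq.symm, hr⟩)
        · exfalso
          have hy := h3 ((b : ℕ) - 1) (by omega)
          rw [hF3 _ (by omega) (by omega)] at hy
          have hy' : y.1.1 < n ∨ y.1 = (n, false) := hy
          have hyn : y.1.1 = n := by rw [hr]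
          rcases hy' with h' | h'
          · omega
          · rw [hr] at h'
            exact absurd (congrArg Prod.snd h') (by simp)
      · rw [hF4 k hk _ hb1 hb2] at h1 h2
        have hr := (minK_KL hn (jj k) y).1 ⟨h1, h2⟩
        rcases Nat.eq_or_lt_of_le hb1 with heq | hlt
        · refine Or.inr (Or.inr ⟨k, hk, heq.symm, hr, ?_⟩)
          intro hyt
          have hyn : y.1.1 = n := by rw [hyt]
          cases k with
          | zero =>
            have hz : ∑ j ∈ Finset.range 0, mm (j + 1) = 0 := Finset.sum_range_zero _
            have hy := h3 ((b : ℕ) - 1) (by omega)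
            rw [hF3 _ (by omega) (by omega)] at hy
            have hy' : y.1.1 < n ∨ y.1 = (n, false) := hy
            rcases hy' with h' | h'
            · omega
            · rw [hyt] at h'
              exact absurd (congrArg Prod.snd h') (by simp)
          | succ k =>
            have := hjj' 0 (k + 1) (by omega) hk
            omega
        · exfalso
          have hy := h3 ((b : ℕ) - 1) (by omega)
          rw [hF4 k hk _ (by omega) (by omega)] at hy
          have : y.1.1 ≤ jj k := hy
          omega
      · have := b.isLt
        omega
    · rintro (⟨k, hk, hbeq, hr⟩ | ⟨hbeq, hy⟩ | ⟨k, hk, hbeq, hr, hne⟩)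
      · have hnn' : 1 ≤ nn k := hnn k hk
        have hsrk : ∑ j ∈ Finset.range (k + 1), nn j
            = ∑ j ∈ Finset.range k, nn j + nn k := Finset.sum_range_succ _ _
        rw [hF2 k hk (b : ℕ) (by omega) (by omega)]
        have hmk := (minK_KL hn (ii k) y).2 hr
        refine ⟨hmk.1, hmk.2, ?_⟩
        intro b' hb'
        refine hanti b' ((b : ℕ) - 1) (by omega) ?_
        cases k with
        | zero =>
          have hz : ∑ j ∈ Finset.range 0, nn j = 0 := Finset.sum_range_zero _
          rw [hF1 _ (by omega)]
          exact y.2.2.1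
        | succ k =>
          have hsrk2 : ∑ j ∈ Finset.range (k + 1), nn j
              = ∑ j ∈ Finset.range k, nn j + nn k := Finset.sum_range_succ _ _
          have hnk : 1 ≤ nn k := hnn k (by omega)
          rw [hF2 k (by omega) _ (by omega) (by omega)]
          have := hii' k (k + 1) (by omega) hk
          show y.1.1 ≤ ii k
          omega
      · rw [hF3 (b : ℕ) (by omega) (by omega)]
        have hmk := (minK_KIn hn y).2 hy
        refine ⟨hmk.1, hmk.2, ?_⟩
        intro b' hb'
        refine hanti b' ((b : ℕ) - 1) (by omega) ?_
        rw [hF2 s' (by omega) _ (by omega) (by omega)]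
        show y.1.1 ≤ ii s'
        have : y.1.1 = n := by rw [hy]
        omega
      · have hmk' : 1 ≤ mm (k + 1) := hmm (k + 1) (by omega)
        have hsrk : ∑ j ∈ Finset.range (k + 1), mm (j + 1)
            = ∑ j ∈ Finset.range k, mm (j + 1) + mm (k + 1) := Finset.sum_range_succ _ _
        rw [hF4 k hk (b : ℕ) (by omega) (by omega)]
        have hmk := (minK_KL hn (jj k) y).2 hr
        refine ⟨hmk.1, hmk.2, ?_⟩
        intro b' hb'
        refine hanti b' ((b : ℕ) - 1) (by omega) ?_
        cases k with
        | zero =>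
          have hz : ∑ j ∈ Finset.range 0, mm (j + 1) = 0 := Finset.sum_range_zero _
          rw [hF3 _ (by omega) (by omega)]
          show y.1.1 < n ∨ y.1 = (n, false)
          rcases Nat.lt_or_ge y.1.1 n with h' | h'
          · exact Or.inl h'
          · have hyn : y.1.1 = n := by have := hj1; omega
            refine Or.inr ?_
            have htag : y.1.2 = false := by
              by_contra hb2
              simp only [Bool.not_eq_false] at hb2
              exact hne (Prod.ext hyn hb2)
            exact Prod.ext hyn htag
        | succ k =>
          have hsrk2 : ∑ j ∈ Finset.range (k + 1), mm (j + 1)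
              = ∑ j ∈ Finset.range k, mm (j + 1) + mm (k + 1) := Finset.sum_range_succ _ _
          have hmk2 : 1 ≤ mm (k + 1) := hmm (k + 1) (by omega)
          rw [hF4 k (by omega) _ (by omega) (by omega)]
          have := hjj' k (k + 1) (by omega) hk
          show y.1.1 ≤ jj k
          omega
  have hregionR : ∀ a : ℕ, a < m → (a < n₀ + 1) ∨
      (∃ k < s', n₀ + 1 + ∑ j ∈ Finset.range k, nn j ≤ a ∧
        a < n₀ + 1 + ∑ j ∈ Finset.range (k + 1), nn j) ∨
      (n₀ + 1 + ∑ j ∈ Finset.range s', nn j ≤ a ∧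
        a < n₀ + 1 + ∑ j ∈ Finset.range s', nn j + nn s') ∨
      (n₀ + 1 + ∑ j ∈ Finset.range s', nn j + nn s' ≤ a ∧
        a < n₀ + 1 + ∑ j ∈ Finset.range s', nn j + nn s' + mm 0) ∨
      (∃ k < t', n₀ + 1 + (∑ j ∈ Finset.range s', nn j) + nn s' + mm 0
          + ∑ j ∈ Finset.range k, mm (j + 1) ≤ a ∧
        a < n₀ + 1 + (∑ j ∈ Finset.range s', nn j) + nn s' + mm 0
          + ∑ j ∈ Finset.range (k + 1), mm (j + 1)) ∨
      (n₀ + 1 + (∑ j ∈ Finset.range s', nn j) + nn s' + mm 0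
          + ∑ j ∈ Finset.range t', mm (j + 1) ≤ a ∧ a < m) := by
    intro a ham
    rcases Nat.lt_or_ge a (n₀ + 1) with h | h
    · exact Or.inl h
    rcases Nat.lt_or_ge a (n₀ + 1 + ∑ j ∈ Finset.range s', nn j) with h2 | h2
    · obtain ⟨k, hk, hb1, hb2⟩ := find_block nn s' (a - (n₀ + 1)) (by omega)
      exact Or.inr (Or.inl ⟨k, hk, by omega, by omega⟩)
    rcases Nat.lt_or_ge a (n₀ + 1 + ∑ j ∈ Finset.range s', nn j + nn s') with h3 | h3
    · exact Or.inr (Or.inr (Or.inl ⟨h2, h3⟩))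
    rcases Nat.lt_or_ge a (n₀ + 1 + ∑ j ∈ Finset.range s', nn j + nn s' + mm 0) with h4 | h4
    · exact Or.inr (Or.inr (Or.inr (Or.inl ⟨h3, h4⟩)))
    rcases Nat.lt_or_ge a (n₀ + 1 + (∑ j ∈ Finset.range s', nn j) + nn s' + mm 0
        + ∑ j ∈ Finset.range t', mm (j + 1)) with h5 | h5
    · obtain ⟨k, hk, hb1, hb2⟩ := find_block (fun j => mm (j + 1)) t'
        (a - (n₀ + 1 + (∑ j ∈ Finset.range s', nn j) + nn s' + mm 0))
        (show a - (n₀ + 1 + (∑ j ∈ Finset.range s', nn j) + nn s' + mm 0)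
          < ∑ j ∈ Finset.range t', mm (j + 1) by omega)
      have hb1' : ∑ j ∈ Finset.range k, mm (j + 1)
          ≤ a - (n₀ + 1 + (∑ j ∈ Finset.range s', nn j) + nn s' + mm 0) := hb1
      have hb2' : a - (n₀ + 1 + (∑ j ∈ Finset.range s', nn j) + nn s' + mm 0)
          < ∑ j ∈ Finset.range (k + 1), mm (j + 1) := hb2
      exact Or.inr (Or.inr (Or.inr (Or.inr (Or.inl ⟨k, hk, by omega, by omega⟩))))
    · exact Or.inr (Or.inr (Or.inr (Or.inr (Or.inr ⟨h5, ham⟩))))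
  have hWA : ∀ k, k < s' + 1 → ∀ (a : Fin m) (x : KType n),
      (a : ℕ) ≤ n₀ + ∑ j ∈ Finset.range k, nn j → x.1.1 ≤ ii k + 1 →
      ∃ q : Fin m × KType n,
        Minimal (fun z => z ∈ ({p : Fin m × KType n | p.2 ∈ evalB BL (p.1 : ℕ)})ᶜ) q ∧
        (a, x) ≤ q := by
    intro k hk a x ha hx
    have h6 := hsumnn (s' + 1) le_rfl k (by omega)
    have hiik := hiin k hk
    have hii2 := hii2n k hk
    refine ⟨(⟨n₀ + ∑ j ∈ Finset.range k, nn j, by omega⟩,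
        ⟨(ii k + 1, false), by omega, by omega, fun _ => rfl⟩), ?_, ?_⟩
    · exact (minimal_prod (evalB BL) hlow _ _).2 ((hmin _ _).2 (Or.inl ⟨k, hk, rfl, rfl⟩))
    · apply Prod.mk_le_mk.2
      exact ⟨by rw [Fin.le_def]; exact ha, (K_le_iff_of_ne (show ii k + 1 ≠ n by omega)).2 hx⟩
  have hWB : ∀ (a : Fin m) (x : KType n),
      (a : ℕ) ≤ n₀ + ∑ j ∈ Finset.range (s' + 1), nn j → (x.1.1 < n ∨ x.1 = (n, true)) →
      ∃ q : Fin m × KType n,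
        Minimal (fun z => z ∈ ({p : Fin m × KType n | p.2 ∈ evalB BL (p.1 : ℕ)})ᶜ) q ∧
        (a, x) ≤ q := by
    intro a x ha hx
    refine ⟨(⟨n₀ + ∑ j ∈ Finset.range (s' + 1), nn j, by omega⟩,
        ⟨(n, true), by omega, by omega, fun h => absurd rfl h⟩), ?_, ?_⟩
    · exact (minimal_prod (evalB BL) hlow _ _).2 ((hmin _ _).2 (Or.inr (Or.inl ⟨rfl, rfl⟩)))
    · apply Prod.mk_le_mk.2
      refine ⟨by rw [Fin.le_def]; exact ha, ?_⟩
      rcases hx with h' | h'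
      · exact (K_le_def _ _).2 (Or.inr h')
      · exact (K_le_def _ _).2 (Or.inl (K_ext h'))
  have hWC : ∀ k, k < t' + 1 → ∀ (a : Fin m) (x : KType n),
      (a : ℕ) ≤ n₀ + (∑ j ∈ Finset.range (s' + 1), nn j) + mm 0
        + ∑ j ∈ Finset.range k, mm (j + 1) →
      jj k + 1 ≠ n → x.1.1 ≤ jj k + 1 →
      ∃ q : Fin m × KType n,
        Minimal (fun z => z ∈ ({p : Fin m × KType n | p.2 ∈ evalB BL (p.1 : ℕ)})ᶜ) q ∧
        (a, x) ≤ q := by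
    intro k hk a x ha hne hx
    have h6 := hsummm (t' + 1) le_rfl k (by omega)
    have hjk := hjjn k hk
    refine ⟨(⟨n₀ + (∑ j ∈ Finset.range (s' + 1), nn j) + mm 0
        + ∑ j ∈ Finset.range k, mm (j + 1), by omega⟩,
        ⟨(jj k + 1, false), by omega, by omega, fun _ => rfl⟩), ?_, ?_⟩
    · exact (minimal_prod (evalB BL) hlow _ _).2
        ((hmin _ _).2 (Or.inr (Or.inr ⟨k, hk, rfl, rfl, by simp⟩)))
    · apply Prod.mk_le_mk.2
      exact ⟨by rw [Fin.le_def]; exact ha, (K_le_iff_of_ne hne).2 hx⟩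
  have hWC0 : ∀ (a : Fin m) (x : KType n),
      (a : ℕ) ≤ n₀ + (∑ j ∈ Finset.range (s' + 1), nn j) + mm 0 →
      jj 0 + 1 = n → (x.1.1 < n ∨ x.1 = (n, false)) →
      ∃ q : Fin m × KType n,
        Minimal (fun z => z ∈ ({p : Fin m × KType n | p.2 ∈ evalB BL (p.1 : ℕ)})ᶜ) q ∧
        (a, x) ≤ q := by
    intro a x ha hjn hx
    have hz : ∑ j ∈ Finset.range 0, mm (j + 1) = 0 := Finset.sum_range_zero _
    refine ⟨(⟨n₀ + (∑ j ∈ Finset.range (s' + 1), nn j) + mm 0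
        + ∑ j ∈ Finset.range 0, mm (j + 1), by omega⟩,
        ⟨(n, false), by omega, by omega, fun _ => rfl⟩), ?_, ?_⟩
    · exact (minimal_prod (evalB BL) hlow _ _).2
        ((hmin _ _).2 (Or.inr (Or.inr ⟨0, by omega, rfl, show n = jj 0 + 1 by omega, by simp⟩)))
    · apply Prod.mk_le_mk.2
      refine ⟨by
        rw [Fin.le_def]
        show (a : ℕ) ≤ n₀ + (∑ j ∈ Finset.range (s' + 1), nn j) + mm 0
          + ∑ j ∈ Finset.range 0, mm (j + 1)
        omega, ?_⟩
      rcases hx with h' | h'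
      · exact (K_le_def _ _).2 (Or.inr h')
      · exact (K_le_def _ _).2 (Or.inl (K_ext h'))
  have hsetgen : ∀ (L : List (Set (KType n))) (G : ℕ → Set (KType n)),
      (∀ a : ℕ, L.getD a ∅ = G a) →
      {p : Fin m × KType n | p.2 ∈ L.getD (p.1 : ℕ) ∅}
        = {p : Fin m × KType n | p.2 ∈ G (p.1 : ℕ)} := by
    intro L G hL
    ext p
    simp only [Set.mem_setOf_eq, hL]
  refine ⟨fun hcase => ?_, fun hcase => ?_⟩
  · -- case jj 0 < n - 1
    set BR1 : List (ℕ × Set (KType n)) :=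
      (n₀ + 1, KL n (ii 0 + 1)) :: (((List.range s').map fun k => (nn k, KL n (ii (k + 1) + 1))) ++
        ((nn s', KIn' n) :: ((mm 0, KL n (jj 0 + 1)) ::
          (((List.range t').map fun k => (mm (k + 1), KL n (jj (k + 1) + 1))) ++
            ((mm (t' + 1) - 1, KL n 0) :: ([] : List (ℕ × Set (KType n)))))))) with hBR1
    have hgetD1 : ∀ a : ℕ,
        (List.replicate (n₀ + 1) (KL n (ii 0 + 1)) ++
          ((List.range s').flatMap fun k => List.replicate (nn k) (KL n (ii (k + 1) + 1))) ++
          List.replicate (nn s') (KIn' n) ++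
          List.replicate (mm 0) (KL n (jj 0 + 1)) ++
          ((List.range t').flatMap fun k =>
            List.replicate (mm (k + 1)) (KL n (jj (k + 1) + 1))) ++
          List.replicate (mm (t' + 1) - 1) (KL n 0)).getD a ∅ = evalB BR1 a := by
      intro a
      rw [show (List.replicate (n₀ + 1) (KL n (ii 0 + 1)) ++
          ((List.range s').flatMap fun k => List.replicate (nn k) (KL n (ii (k + 1) + 1))) ++
          List.replicate (nn s') (KIn' n) ++
          List.replicate (mm 0) (KL n (jj 0 + 1)) ++
          ((List.range t').flatMap fun k =>
            List.replicate (mm (k + 1)) (KL n (jj (k + 1) + 1))) ++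
          List.replicate (mm (t' + 1) - 1) (KL n 0))
          = BR1.flatMap (fun b => List.replicate b.1 b.2) from by
        rw [hBR1]
        simp [List.flatMap_append, List.flatMap_map, List.append_assoc, Function.comp]]
      exact getD_flatMap BR1 a
    have hG1 : ∀ a : ℕ, a < n₀ + 1 → evalB BR1 a = KL n (ii 0 + 1) := by
      intro a ha
      rw [hBR1, evalB_cons, if_pos ha]
    have hG2 : ∀ k, k < s' → ∀ a : ℕ, n₀ + 1 + ∑ j ∈ Finset.range k, nn j ≤ a →
        a < n₀ + 1 + ∑ j ∈ Finset.range (k + 1), nn j → evalB BR1 a = KL n (ii (k + 1) + 1) := by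
      intro k hk a h1 h2
      rw [hBR1, evalB_cons, if_neg (by omega)]
      exact evalB_range_lt (fun k => (nn k, KL n (ii (k + 1) + 1))) s' k _ (a - (n₀ + 1)) hk
        (show ∑ j ∈ Finset.range k, nn j ≤ a - (n₀ + 1) by omega)
        (show a - (n₀ + 1) < ∑ j ∈ Finset.range (k + 1), nn j by omega)
    have hG3 : ∀ a : ℕ, n₀ + 1 + ∑ j ∈ Finset.range s', nn j ≤ a →
        a < n₀ + 1 + ∑ j ∈ Finset.range s', nn j + nn s' → evalB BR1 a = KIn' n := by
      intro a h1 h2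
      rw [hBR1, evalB_cons, if_neg (by omega)]
      rw [evalB_range_ge (fun k => (nn k, KL n (ii (k + 1) + 1))) s' _ (a - (n₀ + 1))
        (show ∑ j ∈ Finset.range s', nn j ≤ a - (n₀ + 1) by omega)]
      rw [evalB_cons,
        if_pos (show a - (n₀ + 1) - ∑ k ∈ Finset.range s', nn k < nn s' by omega)]
    have hG4 : ∀ a : ℕ, n₀ + 1 + ∑ j ∈ Finset.range s', nn j + nn s' ≤ a →
        a < n₀ + 1 + ∑ j ∈ Finset.range s', nn j + nn s' + mm 0 →
        evalB BR1 a = KL n (jj 0 + 1) := by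
      intro a h1 h2
      rw [hBR1, evalB_cons, if_neg (by omega)]
      rw [evalB_range_ge (fun k => (nn k, KL n (ii (k + 1) + 1))) s' _ (a - (n₀ + 1))
        (show ∑ j ∈ Finset.range s', nn j ≤ a - (n₀ + 1) by omega)]
      rw [evalB_cons,
        if_neg (show ¬(a - (n₀ + 1) - ∑ k ∈ Finset.range s', nn k < nn s') by omega)]
      rw [evalB_cons,
        if_pos (show a - (n₀ + 1) - (∑ k ∈ Finset.range s', nn k) - nn s' < mm 0 by omega)]
    have hG5 : ∀ k, k < t' → ∀ a : ℕ,
        n₀ + 1 + (∑ j ∈ Finset.range s', nn j) + nn s' + mm 0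
          + ∑ j ∈ Finset.range k, mm (j + 1) ≤ a →
        a < n₀ + 1 + (∑ j ∈ Finset.range s', nn j) + nn s' + mm 0
          + ∑ j ∈ Finset.range (k + 1), mm (j + 1) →
        evalB BR1 a = KL n (jj (k + 1) + 1) := by
      intro k hk a h1 h2
      rw [hBR1, evalB_cons, if_neg (by omega)]
      rw [evalB_range_ge (fun k => (nn k, KL n (ii (k + 1) + 1))) s' _ (a - (n₀ + 1))
        (show ∑ j ∈ Finset.range s', nn j ≤ a - (n₀ + 1) by omega)]
      rw [evalB_cons,
        if_neg (show ¬(a - (n₀ + 1) - ∑ k ∈ Finset.range s', nn k < nn s') by omega)]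
      rw [evalB_cons,
        if_neg (show ¬(a - (n₀ + 1) - (∑ k ∈ Finset.range s', nn k) - nn s' < mm 0) by omega)]
      exact evalB_range_lt (fun k => (mm (k + 1), KL n (jj (k + 1) + 1))) t' k _
        (a - (n₀ + 1) - (∑ k ∈ Finset.range s', nn k) - nn s' - mm 0) hk
        (show ∑ j ∈ Finset.range k, mm (j + 1)
          ≤ a - (n₀ + 1) - (∑ k ∈ Finset.range s', nn k) - nn s' - mm 0 by omega)
        (show a - (n₀ + 1) - (∑ k ∈ Finset.range s', nn k) - nn s' - mm 0
          < ∑ j ∈ Finset.range (k + 1), mm (j + 1) by omega)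
    have hG6 : ∀ a : ℕ,
        n₀ + 1 + (∑ j ∈ Finset.range s', nn j) + nn s' + mm 0
          + ∑ j ∈ Finset.range t', mm (j + 1) ≤ a → a < m → evalB BR1 a = KL n 0 := by
      intro a h1 h2
      rw [hBR1, evalB_cons, if_neg (by omega)]
      rw [evalB_range_ge (fun k => (nn k, KL n (ii (k + 1) + 1))) s' _ (a - (n₀ + 1))
        (show ∑ j ∈ Finset.range s', nn j ≤ a - (n₀ + 1) by omega)]
      rw [evalB_cons,
        if_neg (show ¬(a - (n₀ + 1) - ∑ k ∈ Finset.range s', nn k < nn s') by omega)]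
      rw [evalB_cons,
        if_neg (show ¬(a - (n₀ + 1) - (∑ k ∈ Finset.range s', nn k) - nn s' < mm 0) by omega)]
      rw [evalB_range_ge (fun k => (mm (k + 1), KL n (jj (k + 1) + 1))) t' _
        (a - (n₀ + 1) - (∑ k ∈ Finset.range s', nn k) - nn s' - mm 0)
        (show ∑ j ∈ Finset.range t', mm (j + 1)
          ≤ a - (n₀ + 1) - (∑ k ∈ Finset.range s', nn k) - nn s' - mm 0 by omega)]
      rw [evalB_cons,
        if_pos (show a - (n₀ + 1) - (∑ k ∈ Finset.range s', nn k) - nn s' - mm 0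
          - ∑ k ∈ Finset.range t', mm (k + 1) < mm (t' + 1) - 1 by omega)]
    rw [hsetgen _ _ hgetD, hsetgen _ _ hgetD1]
    ext ⟨a, x⟩
    simp only [XRev, Set.mem_setOf_eq]
    rcases hregionR (a : ℕ) a.isLt with h | ⟨k, hk, h1, h2⟩ | ⟨h1, h2⟩ | ⟨h1, h2⟩ |
      ⟨k, hk, h1, h2⟩ | ⟨h1, h2⟩
    · rw [hG1 _ h]
      constructor
      · rintro ⟨⟨b, y⟩, hminb, hle⟩
        have hd := (hmin b y).1 ((minimal_prod (evalB BL) hlow b y).1 hminb)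
        rw [Prod.mk_le_mk] at hle
        have hrx := K_le_rank hle.2
        show x.1.1 ≤ ii 0 + 1
        rcases hd with ⟨k2, hk2, hbeq, hr⟩ | ⟨hbeq, hy⟩ | ⟨k2, hk2, hbeq, hr, hne⟩
        · have := hii_le 0 k2 (by omega) hk2
          omega
        · have hyn : y.1.1 = n := by rw [hy]
          have := hiin 0 (by omega)
          omega
        · have h5 := hjjn k2 hk2
          have := hiin 0 (by omega)
          have := hj1
          omega
      · intro hx
        have hz : ∑ j ∈ Finset.range 0, nn j = 0 := Finset.sum_range_zero _
        exact hWA 0 (by omega) a x (by omega) hx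
    · rw [hG2 k hk _ h1 h2]
      constructor
      · rintro ⟨⟨b, y⟩, hminb, hle⟩
        have hd := (hmin b y).1 ((minimal_prod (evalB BL) hlow b y).1 hminb)
        rw [Prod.mk_le_mk] at hle
        have hrx := K_le_rank hle.2
        have hab : (a : ℕ) ≤ (b : ℕ) := Fin.le_def.1 hle.1
        show x.1.1 ≤ ii (k + 1) + 1
        rcases hd with ⟨k2, hk2, hbeq, hr⟩ | ⟨hbeq, hy⟩ | ⟨k2, hk2, hbeq, hr, hne⟩
        · have hk2k : k + 1 ≤ k2 := by
            by_contra hc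
            have h6 := hsumnn k (by omega) k2 (by omega)
            omega
          have h7 := hii_le (k + 1) k2 hk2k hk2
          omega
        · have hyn : y.1.1 = n := by rw [hy]
          have := hiin (k + 1) (by omega)
          omega
        · have h5 := hjjn k2 hk2
          have := hiin (k + 1) (by omega)
          have := hj1
          omega
      · intro hx
        exact hWA (k + 1) (by omega) a x (by omega) hx
    · rw [hG3 _ h1 h2]
      constructor
      · rintro ⟨⟨b, y⟩, hminb, hle⟩
        have hd := (hmin b y).1 ((minimal_prod (evalB BL) hlow b y).1 hminb)
        rw [Prod.mk_le_mk] at hle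
        have hrx := K_le_rank hle.2
        have hab : (a : ℕ) ≤ (b : ℕ) := Fin.le_def.1 hle.1
        show x.1.1 < n ∨ x.1 = (n, true)
        rcases hd with ⟨k2, hk2, hbeq, hr⟩ | ⟨hbeq, hy⟩ | ⟨k2, hk2, hbeq, hr, hne⟩
        · exfalso
          have h6 := hsumnn s' (by omega) k2 (by omega)
          omega
        · rcases (K_le_def x y).1 hle.2 with rfl | hlt
          · exact Or.inr hy
          · have hyn : y.1.1 = n := by rw [hy]
            exact Or.inl (by omega)
        · have h5 := hjjn k2 hk2
          exact Or.inl (by omega)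
      · intro hx
        have hx' : x.1.1 < n ∨ x.1 = (n, true) := hx
        exact hWB a x (by omega) hx'
    · rw [hG4 _ h1 h2]
      constructor
      · rintro ⟨⟨b, y⟩, hminb, hle⟩
        have hd := (hmin b y).1 ((minimal_prod (evalB BL) hlow b y).1 hminb)
        rw [Prod.mk_le_mk] at hle
        have hrx := K_le_rank hle.2
        have hab : (a : ℕ) ≤ (b : ℕ) := Fin.le_def.1 hle.1
        show x.1.1 ≤ jj 0 + 1
        rcases hd with ⟨k2, hk2, hbeq, hr⟩ | ⟨hbeq, hy⟩ | ⟨k2, hk2, hbeq, hr, hne⟩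
        · exfalso
          have h6 := hsumnn (s' + 1) le_rfl k2 (by omega)
          omega
        · exfalso
          omega
        · have h5 := hjjn k2 hk2
          omega
      · intro hx
        have hz : ∑ j ∈ Finset.range 0, mm (j + 1) = 0 := Finset.sum_range_zero _
        exact hWC 0 (by omega) a x (by omega) (by omega) hx
    · rw [hG5 k hk _ h1 h2]
      constructor
      · rintro ⟨⟨b, y⟩, hminb, hle⟩
        have hd := (hmin b y).1 ((minimal_prod (evalB BL) hlow b y).1 hminb)
        rw [Prod.mk_le_mk] at hle
        have hrx := K_le_rank hle.2
        have hab : (a : ℕ) ≤ (b : ℕ) := Fin.le_def.1 hle.1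
        show x.1.1 ≤ jj (k + 1) + 1
        rcases hd with ⟨k2, hk2, hbeq, hr⟩ | ⟨hbeq, hy⟩ | ⟨k2, hk2, hbeq, hr, hne⟩
        · exfalso
          have h6 := hsumnn (s' + 1) le_rfl k2 (by omega)
          omega
        · exfalso
          omega
        · have hk2k : k + 1 ≤ k2 := by
            by_contra hc
            have h6 := hsummm k (by omega) k2 (by omega)
            omega
          have h7 := hjj_le (k + 1) k2 hk2k hk2
          omega
      · intro hx
        have hne : jj (k + 1) + 1 ≠ n := by
          have := hjj' 0 (k + 1) (by omega) (by omega)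
          have := hj1
          omega
        exact hWC (k + 1) (by omega) a x (by omega) hne hx
    · rw [hG6 _ h1 h2]
      constructor
      · rintro ⟨⟨b, y⟩, hminb, hle⟩
        exfalso
        have hd := (hmin b y).1 ((minimal_prod (evalB BL) hlow b y).1 hminb)
        rw [Prod.mk_le_mk] at hle
        have hab : (a : ℕ) ≤ (b : ℕ) := Fin.le_def.1 hle.1
        rcases hd with ⟨k2, hk2, hbeq, hr⟩ | ⟨hbeq, hy⟩ | ⟨k2, hk2, hbeq, hr, hne⟩
        · have h6 := hsumnn (s' + 1) le_rfl k2 (by omega)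
          omega
        · omega
        · have h6 := hsummm t' (by omega) k2 (by omega)
          omega
      · intro hx
        have hx' : x.1.1 ≤ 0 := hx
        have := x.2.1
        omega
  · -- case jj 0 = n - 1
    set BR2 : List (ℕ × Set (KType n)) :=
      (n₀ + 1, KL n (ii 0 + 1)) :: (((List.range s').map fun k => (nn k, KL n (ii (k + 1) + 1))) ++
        ((nn s', KL n n) :: ((mm 0, KIn n) ::
          (((List.range t').map fun k => (mm (k + 1), KL n (jj (k + 1) + 1))) ++
            ((mm (t' + 1) - 1, KL n 0) :: ([] : List (ℕ × Set (KType n)))))))) with hBR2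
    have hgetD2 : ∀ a : ℕ,
        (List.replicate (n₀ + 1) (KL n (ii 0 + 1)) ++
          ((List.range s').flatMap fun k => List.replicate (nn k) (KL n (ii (k + 1) + 1))) ++
          List.replicate (nn s') (KL n n) ++
          List.replicate (mm 0) (KIn n) ++
          ((List.range t').flatMap fun k =>
            List.replicate (mm (k + 1)) (KL n (jj (k + 1) + 1))) ++
          List.replicate (mm (t' + 1) - 1) (KL n 0)).getD a ∅ = evalB BR2 a := by
      intro a
      rw [show (List.replicate (n₀ + 1) (KL n (ii 0 + 1)) ++
          ((List.range s').flatMap fun k => List.replicate (nn k) (KL n (ii (k + 1) + 1))) ++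
          List.replicate (nn s') (KL n n) ++
          List.replicate (mm 0) (KIn n) ++
          ((List.range t').flatMap fun k =>
            List.replicate (mm (k + 1)) (KL n (jj (k + 1) + 1))) ++
          List.replicate (mm (t' + 1) - 1) (KL n 0))
          = BR2.flatMap (fun b => List.replicate b.1 b.2) from by
        rw [hBR2]
        simp [List.flatMap_append, List.flatMap_map, List.append_assoc, Function.comp]]
      exact getD_flatMap BR2 a
    have hG1 : ∀ a : ℕ, a < n₀ + 1 → evalB BR2 a = KL n (ii 0 + 1) := by
      intro a ha
      rw [hBR2, evalB_cons, if_pos ha]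
    have hG2 : ∀ k, k < s' → ∀ a : ℕ, n₀ + 1 + ∑ j ∈ Finset.range k, nn j ≤ a →
        a < n₀ + 1 + ∑ j ∈ Finset.range (k + 1), nn j → evalB BR2 a = KL n (ii (k + 1) + 1) := by
      intro k hk a h1 h2
      rw [hBR2, evalB_cons, if_neg (by omega)]
      exact evalB_range_lt (fun k => (nn k, KL n (ii (k + 1) + 1))) s' k _ (a - (n₀ + 1)) hk
        (show ∑ j ∈ Finset.range k, nn j ≤ a - (n₀ + 1) by omega)
        (show a - (n₀ + 1) < ∑ j ∈ Finset.range (k + 1), nn j by omega)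
    have hG3 : ∀ a : ℕ, n₀ + 1 + ∑ j ∈ Finset.range s', nn j ≤ a →
        a < n₀ + 1 + ∑ j ∈ Finset.range s', nn j + nn s' → evalB BR2 a = KL n n := by
      intro a h1 h2
      rw [hBR2, evalB_cons, if_neg (by omega)]
      rw [evalB_range_ge (fun k => (nn k, KL n (ii (k + 1) + 1))) s' _ (a - (n₀ + 1))
        (show ∑ j ∈ Finset.range s', nn j ≤ a - (n₀ + 1) by omega)]
      rw [evalB_cons,
        if_pos (show a - (n₀ + 1) - ∑ k ∈ Finset.range s', nn k < nn s' by omega)]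
    have hG4 : ∀ a : ℕ, n₀ + 1 + ∑ j ∈ Finset.range s', nn j + nn s' ≤ a →
        a < n₀ + 1 + ∑ j ∈ Finset.range s', nn j + nn s' + mm 0 →
        evalB BR2 a = KIn n := by
      intro a h1 h2
      rw [hBR2, evalB_cons, if_neg (by omega)]
      rw [evalB_range_ge (fun k => (nn k, KL n (ii (k + 1) + 1))) s' _ (a - (n₀ + 1))
        (show ∑ j ∈ Finset.range s', nn j ≤ a - (n₀ + 1) by omega)]
      rw [evalB_cons,
        if_neg (show ¬(a - (n₀ + 1) - ∑ k ∈ Finset.range s', nn k < nn s') by omega)]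
      rw [evalB_cons,
        if_pos (show a - (n₀ + 1) - (∑ k ∈ Finset.range s', nn k) - nn s' < mm 0 by omega)]
    have hG5 : ∀ k, k < t' → ∀ a : ℕ,
        n₀ + 1 + (∑ j ∈ Finset.range s', nn j) + nn s' + mm 0
          + ∑ j ∈ Finset.range k, mm (j + 1) ≤ a →
        a < n₀ + 1 + (∑ j ∈ Finset.range s', nn j) + nn s' + mm 0
          + ∑ j ∈ Finset.range (k + 1), mm (j + 1) →
        evalB BR2 a = KL n (jj (k + 1) + 1) := by
      intro k hk a h1 h2
      rw [hBR2, evalB_cons, if_neg (by omega)]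
      rw [evalB_range_ge (fun k => (nn k, KL n (ii (k + 1) + 1))) s' _ (a - (n₀ + 1))
        (show ∑ j ∈ Finset.range s', nn j ≤ a - (n₀ + 1) by omega)]
      rw [evalB_cons,
        if_neg (show ¬(a - (n₀ + 1) - ∑ k ∈ Finset.range s', nn k < nn s') by omega)]
      rw [evalB_cons,
        if_neg (show ¬(a - (n₀ + 1) - (∑ k ∈ Finset.range s', nn k) - nn s' < mm 0) by omega)]
      exact evalB_range_lt (fun k => (mm (k + 1), KL n (jj (k + 1) + 1))) t' k _
        (a - (n₀ + 1) - (∑ k ∈ Finset.range s', nn k) - nn s' - mm 0) hk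
        (show ∑ j ∈ Finset.range k, mm (j + 1)
          ≤ a - (n₀ + 1) - (∑ k ∈ Finset.range s', nn k) - nn s' - mm 0 by omega)
        (show a - (n₀ + 1) - (∑ k ∈ Finset.range s', nn k) - nn s' - mm 0
          < ∑ j ∈ Finset.range (k + 1), mm (j + 1) by omega)
    have hG6 : ∀ a : ℕ,
        n₀ + 1 + (∑ j ∈ Finset.range s', nn j) + nn s' + mm 0
          + ∑ j ∈ Finset.range t', mm (j + 1) ≤ a → a < m → evalB BR2 a = KL n 0 := by
      intro a h1 h2
      rw [hBR2, evalB_cons, if_neg (by omega)]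
      rw [evalB_range_ge (fun k => (nn k, KL n (ii (k + 1) + 1))) s' _ (a - (n₀ + 1))
        (show ∑ j ∈ Finset.range s', nn j ≤ a - (n₀ + 1) by omega)]
      rw [evalB_cons,
        if_neg (show ¬(a - (n₀ + 1) - ∑ k ∈ Finset.range s', nn k < nn s') by omega)]
      rw [evalB_cons,
        if_neg (show ¬(a - (n₀ + 1) - (∑ k ∈ Finset.range s', nn k) - nn s' < mm 0) by omega)]
      rw [evalB_range_ge (fun k => (mm (k + 1), KL n (jj (k + 1) + 1))) t' _
        (a - (n₀ + 1) - (∑ k ∈ Finset.range s', nn k) - nn s' - mm 0)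
        (show ∑ j ∈ Finset.range t', mm (j + 1)
          ≤ a - (n₀ + 1) - (∑ k ∈ Finset.range s', nn k) - nn s' - mm 0 by omega)]
      rw [evalB_cons,
        if_pos (show a - (n₀ + 1) - (∑ k ∈ Finset.range s', nn k) - nn s' - mm 0
          - ∑ k ∈ Finset.range t', mm (k + 1) < mm (t' + 1) - 1 by omega)]
    rw [hsetgen _ _ hgetD, hsetgen _ _ hgetD2]
    ext ⟨a, x⟩
    simp only [XRev, Set.mem_setOf_eq]
    rcases hregionR (a : ℕ) a.isLt with h | ⟨k, hk, h1, h2⟩ | ⟨h1, h2⟩ | ⟨h1, h2⟩ |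
      ⟨k, hk, h1, h2⟩ | ⟨h1, h2⟩
    · rw [hG1 _ h]
      constructor
      · rintro ⟨⟨b, y⟩, hminb, hle⟩
        have hd := (hmin b y).1 ((minimal_prod (evalB BL) hlow b y).1 hminb)
        rw [Prod.mk_le_mk] at hle
        have hrx := K_le_rank hle.2
        show x.1.1 ≤ ii 0 + 1
        rcases hd with ⟨k2, hk2, hbeq, hr⟩ | ⟨hbeq, hy⟩ | ⟨k2, hk2, hbeq, hr, hne⟩
        · have := hii_le 0 k2 (by omega) hk2
          omega
        · have hyn : y.1.1 = n := by rw [hy]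
          have := hiin 0 (by omega)
          omega
        · have h5 := hjjn k2 hk2
          have := hiin 0 (by omega)
          have := hj1
          omega
      · intro hx
        have hz : ∑ j ∈ Finset.range 0, nn j = 0 := Finset.sum_range_zero _
        exact hWA 0 (by omega) a x (by omega) hx
    · rw [hG2 k hk _ h1 h2]
      constructor
      · rintro ⟨⟨b, y⟩, hminb, hle⟩
        have hd := (hmin b y).1 ((minimal_prod (evalB BL) hlow b y).1 hminb)
        rw [Prod.mk_le_mk] at hle
        have hrx := K_le_rank hle.2
        have hab : (a : ℕ) ≤ (b : ℕ) := Fin.le_def.1 hle.1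
        show x.1.1 ≤ ii (k + 1) + 1
        rcases hd with ⟨k2, hk2, hbeq, hr⟩ | ⟨hbeq, hy⟩ | ⟨k2, hk2, hbeq, hr, hne⟩
        · have hk2k : k + 1 ≤ k2 := by
            by_contra hc
            have h6 := hsumnn k (by omega) k2 (by omega)
            omega
          have h7 := hii_le (k + 1) k2 hk2k hk2
          omega
        · have hyn : y.1.1 = n := by rw [hy]
          have := hiin (k + 1) (by omega)
          omega
        · have h5 := hjjn k2 hk2
          have := hiin (k + 1) (by omega)
          have := hj1
          omega
      · intro hx
        exact hWA (k + 1) (by omega) a x (by omega) hx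
    · rw [hG3 _ h1 h2]
      constructor
      · rintro ⟨⟨b, y⟩, hminb, hle⟩
        have hd := (hmin b y).1 ((minimal_prod (evalB BL) hlow b y).1 hminb)
        rw [Prod.mk_le_mk] at hle
        have hrx := K_le_rank hle.2
        have hab : (a : ℕ) ≤ (b : ℕ) := Fin.le_def.1 hle.1
        show x.1.1 ≤ n
        rcases hd with ⟨k2, hk2, hbeq, hr⟩ | ⟨hbeq, hy⟩ | ⟨k2, hk2, hbeq, hr, hne⟩
        · exfalso
          have h6 := hsumnn s' (by omega) k2 (by omega)
          omega
        · have hyn : y.1.1 = n := by rw [hy]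
          omega
        · have h5 := hjjn k2 hk2
          have := hj1
          omega
      · intro hx
        have hx' : x.1.1 ≤ n := hx
        rcases Nat.lt_or_ge x.1.1 n with h' | h'
        · exact hWB a x (by omega) (Or.inl h')
        · have hxn : x.1.1 = n := by omega
          rcases Bool.eq_false_or_eq_true x.1.2 with hb | hb
          · exact hWB a x (by omega) (Or.inr (Prod.ext hxn hb))
          · exact hWC0 a x (by omega) (by omega) (Or.inr (Prod.ext hxn hb))
    · rw [hG4 _ h1 h2]
      constructor
      · rintro ⟨⟨b, y⟩, hminb, hle⟩
        have hd := (hmin b y).1 ((minimal_prod (evalB BL) hlow b y).1 hminb)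
        rw [Prod.mk_le_mk] at hle
        have hrx := K_le_rank hle.2
        have hab : (a : ℕ) ≤ (b : ℕ) := Fin.le_def.1 hle.1
        show x.1.1 < n ∨ x.1 = (n, false)
        rcases hd with ⟨k2, hk2, hbeq, hr⟩ | ⟨hbeq, hy⟩ | ⟨k2, hk2, hbeq, hr, hne⟩
        · exfalso
          have h6 := hsumnn (s' + 1) le_rfl k2 (by omega)
          omega
        · exfalso
          omega
        · have h5 := hjjn k2 hk2
          rcases (K_le_def x y).1 hle.2 with rfl | hlt
          · rcases Nat.lt_or_ge x.1.1 n with h' | h'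
            · exact Or.inl h'
            · have hyn : x.1.1 = n := by omega
              rcases Bool.eq_false_or_eq_true x.1.2 with hb | hb
              · exact absurd (Prod.ext hyn hb) hne
              · exact Or.inr (Prod.ext hyn hb)
          · exact Or.inl (by omega)
      · intro hx
        have hx' : x.1.1 < n ∨ x.1 = (n, false) := hx
        exact hWC0 a x (by omega) (by omega) hx'
    · rw [hG5 k hk _ h1 h2]
      constructor
      · rintro ⟨⟨b, y⟩, hminb, hle⟩
        have hd := (hmin b y).1 ((minimal_prod (evalB BL) hlow b y).1 hminb)
        rw [Prod.mk_le_mk] at hle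
        have hrx := K_le_rank hle.2
        have hab : (a : ℕ) ≤ (b : ℕ) := Fin.le_def.1 hle.1
        show x.1.1 ≤ jj (k + 1) + 1
        rcases hd with ⟨k2, hk2, hbeq, hr⟩ | ⟨hbeq, hy⟩ | ⟨k2, hk2, hbeq, hr, hne⟩
        · exfalso
          have h6 := hsumnn (s' + 1) le_rfl k2 (by omega)
          omega
        · exfalso
          omega
        · have hk2k : k + 1 ≤ k2 := by
            by_contra hc
            have h6 := hsummm k (by omega) k2 (by omega)
            omega
          have h7 := hjj_le (k + 1) k2 hk2k hk2
          omega
      · intro hx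
        have hne : jj (k + 1) + 1 ≠ n := by
          have := hjj' 0 (k + 1) (by omega) (by omega)
          have := hj1
          omega
        exact hWC (k + 1) (by omega) a x (by omega) hne hx
    · rw [hG6 _ h1 h2]
      constructor
      · rintro ⟨⟨b, y⟩, hminb, hle⟩
        exfalso
        have hd := (hmin b y).1 ((minimal_prod (evalB BL) hlow b y).1 hminb)
        rw [Prod.mk_le_mk] at hle
        have hab : (a : ℕ) ≤ (b : ℕ) := Fin.le_def.1 hle.1
        rcases hd with ⟨k2, hk2, hbeq, hr⟩ | ⟨hbeq, hy⟩ | ⟨k2, hk2, hbeq, hr, hne⟩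
        · have h6 := hsumnn (s' + 1) le_rfl k2 (by omega)
          omega
        · omega
        · have h6 := hsummm t' (by omega) k2 (by omega)
          omega
      · intro hx
        have hx' : x.1.1 ≤ 0 := hx
        have := x.2.1
        omega
end

section
/- Let n ≥ 2 and let P = [n−1] ⊔ [n−1] be the disjoint union of two (n−1)-element chains. Then the reverse operator 𝔛 acting on the lower sets of P has exactly n orbits, and each orbit has exactly n elements. -/
/-- The `𝔛`-orbit of a lower set `I` of a finite poset (forward iteration; since
`𝔛` is a bijection on lower sets of a finite poset, this is the full orbit). -/
def XOrbit {α : Type*} [PartialOrder α] (I : Set α) : Set (Set α) :=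
  {J | ∃ k : ℕ, XRev^[k] I = J}

namespace XAux

/-- The lower set of `Fin m ⊕ Fin m` consisting of the first `a` elements of the
left chain and the first `b` elements of the right chain. -/
def S (m : ℕ) (a b : Fin (m + 1)) : Set (Fin m ⊕ Fin m) :=
  {z | Sum.elim (fun x : Fin m => (x : ℕ) < (a : ℕ)) (fun y : Fin m => (y : ℕ) < (b : ℕ)) z}

lemma mem_S_inl {m : ℕ} {a b : Fin (m + 1)} {x : Fin m} :
    Sum.inl x ∈ S m a b ↔ (x : ℕ) < (a : ℕ) := Iff.rfl

lemma mem_S_inr {m : ℕ} {a b : Fin (m + 1)} {y : Fin m} :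
    Sum.inr y ∈ S m a b ↔ (y : ℕ) < (b : ℕ) := Iff.rfl

lemma S_lower {m : ℕ} (a b : Fin (m + 1)) : IsLowerSet (S m a b) := by
  rintro (x | x) (y | y) h hx
  · exact lt_of_le_of_lt (Fin.le_def.mp (Sum.inl_le_inl_iff.mp h)) hx
  · exact absurd h Sum.not_inr_le_inl
  · exact absurd h Sum.not_inl_le_inr
  · exact lt_of_le_of_lt (Fin.le_def.mp (Sum.inr_le_inr_iff.mp h)) hx

lemma val_eq_of_iff {m : ℕ} {a a' : Fin (m + 1)}
    (h : ∀ x : Fin m, (x : ℕ) < (a : ℕ) ↔ (x : ℕ) < (a' : ℕ)) : a = a' := by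
  have ha := Nat.lt_succ_iff.mp a.isLt
  have ha' := Nat.lt_succ_iff.mp a'.isLt
  apply Fin.val_injective
  by_contra hne
  rcases Nat.lt_or_ge (a : ℕ) (a' : ℕ) with hlt | hge
  · have := h ⟨(a : ℕ), by omega⟩
    simp at this
    omega
  · have hlt : (a' : ℕ) < (a : ℕ) := by omega
    have := h ⟨(a' : ℕ), by omega⟩
    simp at this
    omega

lemma S_inj {m : ℕ} {a b a' b' : Fin (m + 1)} (h : S m a b = S m a' b') :
    a = a' ∧ b = b' := by
  constructor
  · exact val_eq_of_iff fun x => by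
      simpa [mem_S_inl] using Set.ext_iff.mp h (Sum.inl x)
  · exact val_eq_of_iff fun x => by
      simpa [mem_S_inr] using Set.ext_iff.mp h (Sum.inr x)

lemma minimal_inl {m : ℕ} {a b : Fin (m + 1)} {x : Fin m} :
    Minimal (fun z => z ∈ (S m a b)ᶜ) (Sum.inl x) ↔ (x : ℕ) = (a : ℕ) := by
  constructor
  · rintro ⟨hmem, hmin⟩
    have hax : (a : ℕ) ≤ (x : ℕ) := by
      simpa [mem_S_inl] using hmem
    rcases eq_or_lt_of_le hax with h | h
    · omega
    · have ham : (a : ℕ) < m := lt_of_lt_of_le h (Nat.le_of_lt_succ (Nat.lt_succ_of_lt x.isLt))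
      have := hmin (y := Sum.inl ⟨(a : ℕ), ham⟩)
        (by simp [mem_S_inl]) (Sum.inl_le_inl_iff.mpr (by exact Fin.le_def.mpr (le_of_lt h)))
      have := Sum.inl_le_inl_iff.mp this
      have := Fin.le_def.mp this
      simp at this
      omega
  · intro hx
    refine ⟨by simp [mem_S_inl, hx], ?_⟩
    rintro (y | y) hy hle
    · have hay : (a : ℕ) ≤ (y : ℕ) := by simpa [mem_S_inl] using hy
      have hyx : (y : ℕ) ≤ (x : ℕ) := Fin.le_def.mp (Sum.inl_le_inl_iff.mp hle)
      exact Sum.inl_le_inl_iff.mpr (Fin.le_def.mpr (by omega))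
    · exact absurd hle Sum.not_inr_le_inl

lemma minimal_inr {m : ℕ} {a b : Fin (m + 1)} {y : Fin m} :
    Minimal (fun z => z ∈ (S m a b)ᶜ) (Sum.inr y) ↔ (y : ℕ) = (b : ℕ) := by
  constructor
  · rintro ⟨hmem, hmin⟩
    have hby : (b : ℕ) ≤ (y : ℕ) := by simpa [mem_S_inr] using hmem
    rcases eq_or_lt_of_le hby with h | h
    · omega
    · have hbm : (b : ℕ) < m := lt_of_lt_of_le h (Nat.le_of_lt_succ (Nat.lt_succ_of_lt y.isLt))
      have := hmin (y := Sum.inr ⟨(b : ℕ), hbm⟩)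
        (by simp [mem_S_inr]) (Sum.inr_le_inr_iff.mpr (by exact Fin.le_def.mpr (le_of_lt h)))
      have := Sum.inr_le_inr_iff.mp this
      have := Fin.le_def.mp this
      simp at this
      omega
  · intro hx
    refine ⟨by simp [mem_S_inr, hx], ?_⟩
    rintro (z | z) hz hle
    · exact absurd hle Sum.not_inl_le_inr
    · have hbz : (b : ℕ) ≤ (z : ℕ) := by simpa [mem_S_inr] using hz
      have hzy : (z : ℕ) ≤ (y : ℕ) := Fin.le_def.mp (Sum.inr_le_inr_iff.mp hle)
      exact Sum.inr_le_inr_iff.mpr (Fin.le_def.mpr (by omega))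

lemma val_add_one {m : ℕ} (a : Fin (m + 1)) {k : ℕ} (hk : k < m + 1) :
    ((a + 1 : Fin (m + 1)) : ℕ) = ((a : ℕ) + 1) % (m + 1) := by
  simp [Fin.add_def]

lemma XRev_S {m : ℕ} (a b : Fin (m + 1)) :
    XRev (S m a b) = S m (a + 1) (b + 1) := by
  have hval : ∀ c : Fin (m + 1), ((c + 1 : Fin (m + 1)) : ℕ) = ((c : ℕ) + 1) % (m + 1) := by
    intro c; simp [Fin.add_def]
  ext z
  rcases z with x | x
  · constructor
    · rintro ⟨y, hy, hle⟩
      rcases y with y | y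
      · have hya : (y : ℕ) = (a : ℕ) := minimal_inl.mp hy
        have hxy : (x : ℕ) ≤ (y : ℕ) := Fin.le_def.mp (Sum.inl_le_inl_iff.mp hle)
        have hym : (y : ℕ) < m := y.isLt
        rw [mem_S_inl, hval]
        have ham : (a : ℕ) < m := by omega
        rw [Nat.mod_eq_of_lt (by omega)]
        omega
      · exact absurd hle Sum.not_inl_le_inr
    · intro hx
      rw [mem_S_inl, hval] at hx
      have ham : (a : ℕ) < m := by
        by_contra h
        have : (a : ℕ) = m := by omega
        rw [this, Nat.mod_self] at hx
        omega
      rw [Nat.mod_eq_of_lt (by omega)] at hx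
      exact ⟨Sum.inl ⟨(a : ℕ), ham⟩, minimal_inl.mpr rfl,
        Sum.inl_le_inl_iff.mpr (Fin.le_def.mpr (by simp; omega))⟩
  · constructor
    · rintro ⟨y, hy, hle⟩
      rcases y with y | y
      · exact absurd hle Sum.not_inr_le_inl
      · have hyb : (y : ℕ) = (b : ℕ) := minimal_inr.mp hy
        have hxy : (x : ℕ) ≤ (y : ℕ) := Fin.le_def.mp (Sum.inr_le_inr_iff.mp hle)
        have hym : (y : ℕ) < m := y.isLt
        rw [mem_S_inr, hval]
        rw [Nat.mod_eq_of_lt (by omega)]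
        omega
    · intro hx
      rw [mem_S_inr, hval] at hx
      have hbm : (b : ℕ) < m := by
        by_contra h
        have : (b : ℕ) = m := by omega
        rw [this, Nat.mod_self] at hx
        omega
      rw [Nat.mod_eq_of_lt (by omega)] at hx
      exact ⟨Sum.inr ⟨(b : ℕ), hbm⟩, minimal_inr.mpr rfl,
        Sum.inr_le_inr_iff.mpr (Fin.le_def.mpr (by simp; omega))⟩

open Fin.NatCast Fin.CommRing in
lemma iterate_S {m : ℕ} (a b : Fin (m + 1)) (k : ℕ) :
    XRev^[k] (S m a b) = S m (a + (k : Fin (m + 1))) (b + (k : Fin (m + 1))) := by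
  induction k with
  | zero => simp
  | succ k ih =>
      rw [Function.iterate_succ_apply', ih, XRev_S]
      push_cast
      ring_nf

lemma exists_c {m : ℕ} (T : Set (Fin m)) (hT : IsLowerSet T) :
    ∃ c : Fin (m + 1), T = {x : Fin m | (x : ℕ) < (c : ℕ)} := by
  rcases Set.eq_empty_or_nonempty T with rfl | hne
  · exact ⟨0, by ext x; simp⟩
  · obtain ⟨x0, hx0, hmax⟩ := Set.exists_max_image T id (Set.toFinite T) hne
    refine ⟨⟨(x0 : ℕ) + 1, by omega⟩, ?_⟩
    ext x
    simp only [Set.mem_setOf_eq]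
    constructor
    · intro hx
      have := hmax x hx
      simp only [id] at this
      have := Fin.le_def.mp this
      omega
    · intro hx
      exact hT (Fin.le_def.mpr (by omega)) hx0

lemma lower_eq_S {m : ℕ} (I : Set (Fin m ⊕ Fin m)) (hI : IsLowerSet I) :
    ∃ a b : Fin (m + 1), I = S m a b := by
  have h1 : IsLowerSet {x : Fin m | Sum.inl x ∈ I} := by
    intro x y hle hy
    exact hI (Sum.inl_le_inl_iff.mpr hle) hy
  have h2 : IsLowerSet {x : Fin m | Sum.inr x ∈ I} := by
    intro x y hle hy
    exact hI (Sum.inr_le_inr_iff.mpr hle) hy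
  obtain ⟨a, ha⟩ := exists_c _ h1
  obtain ⟨b, hb⟩ := exists_c _ h2
  refine ⟨a, b, ?_⟩
  ext z
  rcases z with x | x
  · exact (Set.ext_iff.mp ha x)
  · exact (Set.ext_iff.mp hb x)

end XAux

namespace XAux

open Fin.NatCast Fin.CommRing in
lemma XOrbit_S {m : ℕ} (a b : Fin (m + 1)) :
    XOrbit (S m a b) = Set.range (fun k : Fin (m + 1) => S m (a + k) (b + k)) := by
  ext J
  constructor
  · rintro ⟨k, rfl⟩
    exact ⟨(k : Fin (m + 1)), (iterate_S a b k).symm⟩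
  · rintro ⟨k, rfl⟩
    exact ⟨(k : ℕ), by rw [iterate_S, Fin.cast_val_eq_self]⟩

lemma S_add_inj {m : ℕ} (a b : Fin (m + 1)) :
    Function.Injective (fun k : Fin (m + 1) => S m (a + k) (b + k)) := by
  intro k k' h
  have := (S_inj h).1
  exact add_left_cancel this

lemma ncard_XOrbit_S {m : ℕ} (a b : Fin (m + 1)) :
    (XOrbit (S m a b)).ncard = m + 1 := by
  rw [XOrbit_S, ← Set.image_univ, Set.ncard_image_of_injective _ (S_add_inj a b),
    Set.ncard_univ, Nat.card_eq_fintype_card, Fintype.card_fin]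

open Fin.NatCast Fin.CommRing in
lemma XOrbit_S_eq {m : ℕ} (a b : Fin (m + 1)) :
    XOrbit (S m a b) = XOrbit (S m 0 (b - a)) := by
  rw [XOrbit_S, XOrbit_S]
  ext J
  constructor
  · rintro ⟨k, rfl⟩
    refine ⟨a + k, ?_⟩
    simp only
    congr 1 <;> ring
  · rintro ⟨k, rfl⟩
    refine ⟨k - a, ?_⟩
    simp only
    congr 1 <;> ring

lemma orbits_eq_range {m : ℕ} :
    {O : Set (Set (Fin m ⊕ Fin m)) | ∃ I : Set (Fin m ⊕ Fin m), IsLowerSet I ∧ O = XOrbit I}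
      = Set.range (fun d : Fin (m + 1) => XOrbit (S m 0 d)) := by
  ext O
  constructor
  · rintro ⟨I, hI, rfl⟩
    obtain ⟨a, b, rfl⟩ := lower_eq_S I hI
    exact ⟨b - a, (XOrbit_S_eq a b).symm⟩
  · rintro ⟨d, rfl⟩
    exact ⟨S m 0 d, S_lower 0 d, rfl⟩

lemma orbit_inj {m : ℕ} :
    Function.Injective (fun d : Fin (m + 1) => XOrbit (S m 0 d)) := by
  intro d d' h
  simp only at h
  have hmem : S m 0 d ∈ XOrbit (S m 0 d') := by
    rw [← h]; exact ⟨0, rfl⟩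
  rw [XOrbit_S] at hmem
  obtain ⟨k, hk⟩ := hmem
  obtain ⟨h1, h2⟩ := S_inj hk
  have hk0 : k = 0 := by simpa using h1
  rw [hk0, add_zero] at h2
  exact h2.symm

lemma ncard_orbits {m : ℕ} :
    Set.ncard {O : Set (Set (Fin m ⊕ Fin m)) |
        ∃ I : Set (Fin m ⊕ Fin m), IsLowerSet I ∧ O = XOrbit I} = m + 1 := by
  rw [orbits_eq_range, ← Set.image_univ, Set.ncard_image_of_injective _ orbit_inj,
    Set.ncard_univ, Nat.card_eq_fintype_card, Fintype.card_fin]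

end XAux

/-- For `P = [n-1] ⊔ [n-1]` (the disjoint union of two `(n-1)`-element chains,
realized as `Fin (n-1) ⊕ Fin (n-1)`), the reverse operator `𝔛` on the lower
sets of `P` has exactly `n` orbits, and each orbit has exactly `n` elements. -/
theorem stmt5 (n : ℕ) (hn : 2 ≤ n) :
    Set.ncard {O : Set (Set (Fin (n - 1) ⊕ Fin (n - 1))) |
        ∃ I : Set (Fin (n - 1) ⊕ Fin (n - 1)), IsLowerSet I ∧ O = XOrbit I} = n ∧
      ∀ I : Set (Fin (n - 1) ⊕ Fin (n - 1)), IsLowerSet I →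
        (XOrbit I).ncard = n := by
  obtain ⟨m, rfl⟩ : ∃ m, n = m + 1 := ⟨n - 1, by omega⟩
  refine ⟨XAux.ncard_orbits, fun I hI => ?_⟩
  obtain ⟨a, b, rfl⟩ := XAux.lower_eq_S I hI
  exact XAux.ncard_XOrbit_S a b
end

section
/- Let n ≥ 3 and let P = [2] × [2n−3] be the product of a 2-element chain and a (2n−3)-element chain. Then the reverse operator 𝔛 acting on the lower sets of P has exactly n−1 orbits, each orbit has exactly 2n−1 elements, and each orbit contains exactly one lower set of cardinality 2n−3. -/
namespace S7

/-- The staircase lower set with `a` elements in row 0 and `b` in row 1. -/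
def idl (m a b : ℕ) : Set (Fin 2 × Fin m) :=
  {p | p.2.val < if p.1.val = 0 then a else b}

lemma mem_idl {m a b : ℕ} {p : Fin 2 × Fin m} :
    p ∈ idl m a b ↔ p.2.val < if p.1.val = 0 then a else b := Iff.rfl

lemma fin2_cases (x : Fin 2) : x.val = 0 ∨ x.val = 1 := by omega

lemma idl_lower {m a b : ℕ} (hba : b ≤ a) : IsLowerSet (idl m a b) := by
  intro q p hpq hq
  rw [mem_idl] at *
  obtain ⟨h1, h2⟩ := hpq
  have h1' : p.1.val ≤ q.1.val := h1
  have h2' : p.2.val ≤ q.2.val := h2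
  rcases fin2_cases p.1 with hp | hp <;> rcases fin2_cases q.1 with hq1 | hq1 <;>
    simp_all <;> omega

lemma idl_inj {m a b a' b' : ℕ} (ha : a ≤ m) (hb : b ≤ m) (ha' : a' ≤ m) (hb' : b' ≤ m)
    (h : idl m a b = idl m a' b') : a = a' ∧ b = b' := by
  have key : ∀ x : Fin 2, ∀ i : ℕ, ∀ hi : i < m,
      ((⟨x, ⟨i, hi⟩⟩ : Fin 2 × Fin m) ∈ idl m a b ↔
       (⟨x, ⟨i, hi⟩⟩ : Fin 2 × Fin m) ∈ idl m a' b') := by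
    intro x i hi; rw [h]
  constructor
  · by_contra hne
    rcases Nat.lt_or_ge a a' with hlt | hge
    · have := (key 0 a (by omega)).2 (by simp [mem_idl]; omega)
      simp [mem_idl] at this
    · have hlt : a' < a := by omega
      have := (key 0 a' (by omega)).1 (by simp [mem_idl]; omega)
      simp [mem_idl] at this
  · by_contra hne
    rcases Nat.lt_or_ge b b' with hlt | hge
    · have := (key 1 b (by omega)).2 (by simp [mem_idl]; omega)
      simp [mem_idl] at this
    · have hlt : b' < b := by omega
      have := (key 1 b' (by omega)).1 (by simp [mem_idl]; omega)
      simp [mem_idl] at this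

lemma ncard_idl {m a b : ℕ} (ha : a ≤ m) (hb : b ≤ m) : (idl m a b).ncard = a + b := by
  classical
  have : idl m a b = Set.range (fun s : Fin a ⊕ Fin b =>
      Sum.elim (fun i : Fin a => ((0 : Fin 2), Fin.castLE ha i))
               (fun j : Fin b => ((1 : Fin 2), Fin.castLE hb j)) s) := by
    ext ⟨x, i⟩
    simp only [Set.mem_range, mem_idl]
    constructor
    · intro hx
      rcases fin2_cases x with h0 | h0
      · simp [h0] at hx
        refine ⟨Sum.inl ⟨i.val, hx⟩, ?_⟩
        simp [Fin.castLE, Prod.ext_iff, Fin.ext_iff]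
        omega
      · simp [h0] at hx
        refine ⟨Sum.inr ⟨i.val, hx⟩, ?_⟩
        simp [Fin.castLE, Prod.ext_iff, Fin.ext_iff]
        omega
    · rintro ⟨s, hs⟩
      rcases s with s | s <;> simp at hs <;>
        obtain ⟨h1, h2⟩ := hs <;> subst h1 <;> simp [← h2, Fin.castLE] <;> omega
  have hinj : Function.Injective (fun s : Fin a ⊕ Fin b =>
      Sum.elim (fun i : Fin a => ((0 : Fin 2), Fin.castLE ha i))
               (fun j : Fin b => ((1 : Fin 2), Fin.castLE hb j)) s) := by
    rintro (s | s) (t | t) h <;> simp [Fin.castLE, Prod.ext_iff, Fin.ext_iff] at h <;>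
      first | exact congrArg _ (Fin.ext h) | simp_all
  rw [this, ← Nat.card_coe_set_eq, Nat.card_range_of_injective hinj]
  simp

/-- A lower set in `Fin m` is an initial segment. -/
lemma fin_lower {m : ℕ} (S : Set (Fin m)) (hS : ∀ i j : Fin m, i ≤ j → j ∈ S → i ∈ S) :
    ∃ a ≤ m, S = {i : Fin m | i.val < a} := by
  classical
  rcases S.eq_empty_or_nonempty with h | h
  · exact ⟨0, Nat.zero_le m, by simp [h]⟩
  · have hfin : S.Finite := Set.toFinite S
    obtain ⟨T, hT⟩ : ∃ T : Finset (Fin m), ↑T = S := ⟨hfin.toFinset, hfin.coe_toFinset⟩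
    have hTne : T.Nonempty := by
      rw [← Finset.coe_nonempty, hT]; exact h
    refine ⟨(T.max' hTne).val + 1, (T.max' hTne).isLt, ?_⟩
    ext i
    simp only [Set.mem_setOf_eq]
    constructor
    · intro hi
      have : i ∈ T := by rw [← hT] at hi; exact_mod_cast hi
      have := T.le_max' i this
      omega
    · intro hi
      have hmax : T.max' hTne ∈ S := by rw [← hT]; exact_mod_cast T.max'_mem hTne
      exact hS i (T.max' hTne) (by exact Nat.lt_succ_iff.mp hi) hmax

lemma lower_classify {m : ℕ} {I : Set (Fin 2 × Fin m)} (hI : IsLowerSet I) :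
    ∃ a b : ℕ, b ≤ a ∧ a ≤ m ∧ I = idl m a b := by
  obtain ⟨a, ham, hS0⟩ := fin_lower {i : Fin m | ((0 : Fin 2), i) ∈ I}
    (fun i j hij hj => hI (Prod.mk_le_mk.mpr ⟨le_refl _, hij⟩) hj)
  obtain ⟨b, hbm, hS1⟩ := fin_lower {i : Fin m | ((1 : Fin 2), i) ∈ I}
    (fun i j hij hj => hI (Prod.mk_le_mk.mpr ⟨le_refl _, hij⟩) hj)
  have hba : b ≤ a := by
    by_contra hab
    push_neg at hab
    have h1 : ((1 : Fin 2), (⟨a, by omega⟩ : Fin m)) ∈ I := by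
      have : (⟨a, by omega⟩ : Fin m) ∈ {i : Fin m | ((1 : Fin 2), i) ∈ I} := by
        rw [hS1]; simp; omega
      exact this
    have h0 : ((0 : Fin 2), (⟨a, by omega⟩ : Fin m)) ∈ I :=
      hI (Prod.mk_le_mk.mpr ⟨by exact Fin.zero_le _, le_refl _⟩) h1
    have : (⟨a, by omega⟩ : Fin m) ∈ {i : Fin m | ((0 : Fin 2), i) ∈ I} := h0
    rw [hS0] at this
    simp at this
  refine ⟨a, b, hba, ham, ?_⟩
  ext ⟨x, i⟩
  rcases fin2_cases x with hx | hx
  · have hx' : x = 0 := Fin.ext hx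
    subst hx'
    have : ((0 : Fin 2), i) ∈ I ↔ i ∈ {j : Fin m | ((0 : Fin 2), j) ∈ I} := Iff.rfl
    rw [this, hS0]
    simp [idl]
  · have hx' : x = 1 := Fin.ext hx
    subst hx'
    have : ((1 : Fin 2), i) ∈ I ↔ i ∈ {j : Fin m | ((1 : Fin 2), j) ∈ I} := Iff.rfl
    rw [this, hS1]
    simp [idl]

lemma le_iff {m : ℕ} {p q : Fin 2 × Fin m} :
    p ≤ q ↔ p.1.val ≤ q.1.val ∧ p.2.val ≤ q.2.val := by
  rw [Prod.le_def, Fin.le_def, Fin.le_def]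

lemma mem_compl_idl {m a b : ℕ} {p : Fin 2 × Fin m} :
    p ∈ (idl m a b)ᶜ ↔ (if p.1.val = 0 then a else b) ≤ p.2.val := by
  simp [idl]

lemma min_char {m a b : ℕ} (hba : b ≤ a) (ham : a ≤ m) {y : Fin 2 × Fin m} :
    Minimal (fun z => z ∈ (idl m a b)ᶜ) y ↔
      ((y.1.val = 0 ∧ y.2.val = a) ∨ (y.1.val = 1 ∧ y.2.val = b ∧ b < a)) := by
  constructor
  · rintro ⟨hy, hmin⟩
    rw [mem_compl_idl] at hy
    rcases fin2_cases y.1 with h1 | h1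
    · left
      refine ⟨h1, ?_⟩
      rw [if_pos h1] at hy
      have ham' : a < m := lt_of_le_of_lt hy y.2.isLt
      have hz : ((⟨0, by omega⟩, ⟨a, ham'⟩) : Fin 2 × Fin m) ∈ (idl m a b)ᶜ := by
        rw [mem_compl_idl]; simp
      have hle : ((⟨0, by omega⟩, ⟨a, ham'⟩) : Fin 2 × Fin m) ≤ y := by
        rw [le_iff]; simp [h1, hy]
      have := hmin hz hle
      rw [le_iff] at this
      simp at this
      omega
    · right
      rw [if_neg (by omega)] at hy
      have hya : y.2.val < a := by
        by_contra hc
        push_neg at hc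
        have hz : ((⟨0, by omega⟩, y.2) : Fin 2 × Fin m) ∈ (idl m a b)ᶜ := by
          rw [mem_compl_idl]; simpa
        have hle : ((⟨0, by omega⟩, y.2) : Fin 2 × Fin m) ≤ y := by
          rw [le_iff]; simp
        have := hmin hz hle
        rw [le_iff] at this
        simp [h1] at this
      have hbm : b < m := by omega
      have hz : ((⟨1, by omega⟩, ⟨b, hbm⟩) : Fin 2 × Fin m) ∈ (idl m a b)ᶜ := by
        rw [mem_compl_idl]; simp
      have hle : ((⟨1, by omega⟩, ⟨b, hbm⟩) : Fin 2 × Fin m) ≤ y := by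
        rw [le_iff]; simp [h1, hy]
      have := hmin hz hle
      rw [le_iff] at this
      simp at this
      exact ⟨h1, by omega, by omega⟩
  · rintro (⟨h1, h2⟩ | ⟨h1, h2, h3⟩)
    · constructor
      · show y ∈ (idl m a b)ᶜ
        rw [mem_compl_idl, if_pos h1]; omega
      · intro z hz hzy
        have hz' : z ∈ (idl m a b)ᶜ := hz
        rw [mem_compl_idl] at hz'
        rw [le_iff] at hzy ⊢
        have hz1 : z.1.val = 0 := by omega
        rw [if_pos hz1] at hz'
        omega
    · constructor
      · show y ∈ (idl m a b)ᶜ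
        rw [mem_compl_idl, if_neg (by omega)]; omega
      · intro z hz hzy
        have hz' : z ∈ (idl m a b)ᶜ := hz
        rw [mem_compl_idl] at hz'
        rw [le_iff] at hzy ⊢
        rcases fin2_cases z.1 with hz1 | hz1
        · rw [if_pos hz1] at hz'; omega
        · rw [if_neg (by omega)] at hz'; omega

lemma XRev_idl1 {m a b : ℕ} (hba : b < a) (ham : a < m) :
    XRev (idl m a b) = idl m (a+1) (b+1) := by
  ext x
  simp only [XRev, Set.mem_setOf_eq, mem_idl]
  constructor
  · rintro ⟨y, hy, hxy⟩
    rw [min_char (le_of_lt hba) (le_of_lt ham)] at hy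
    rw [le_iff] at hxy
    have hx2 := x.1.isLt
    have hy2 := y.1.isLt
    split <;> rcases hy with ⟨h1, h2⟩ | ⟨h1, h2, h3⟩ <;> omega
  · intro hx
    rcases fin2_cases x.1 with hx1 | hx1
    · rw [if_pos hx1] at hx
      refine ⟨(⟨0, by omega⟩, ⟨a, ham⟩), ?_, ?_⟩
      · rw [min_char (le_of_lt hba) (le_of_lt ham)]; left; simp
      · rw [le_iff]; simp [hx1]; omega
    · rw [if_neg (by omega)] at hx
      refine ⟨(⟨1, by omega⟩, ⟨b, by omega⟩), ?_, ?_⟩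
      · rw [min_char (le_of_lt hba) (le_of_lt ham)]; right; simp; omega
      · rw [le_iff]; simp [hx1]; omega

lemma XRev_idl2 {m a : ℕ} (ham : a < m) :
    XRev (idl m a a) = idl m (a+1) 0 := by
  ext x
  simp only [XRev, Set.mem_setOf_eq, mem_idl]
  constructor
  · rintro ⟨y, hy, hxy⟩
    rw [min_char (le_refl a) (le_of_lt ham)] at hy
    rw [le_iff] at hxy
    have hx2 := x.1.isLt
    have hy2 := y.1.isLt
    split <;> rcases hy with ⟨h1, h2⟩ | ⟨h1, h2, h3⟩ <;> omega
  · intro hx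
    rcases fin2_cases x.1 with hx1 | hx1
    · rw [if_pos hx1] at hx
      refine ⟨(⟨0, by omega⟩, ⟨a, ham⟩), ?_, ?_⟩
      · rw [min_char (le_refl a) (le_of_lt ham)]; left; simp
      · rw [le_iff]; simp [hx1]; omega
    · rw [if_neg (by omega)] at hx
      omega
lemma XRev_idl3 {m b : ℕ} (hbm : b < m) :
    XRev (idl m m b) = idl m (b+1) (b+1) := by
  ext x
  simp only [XRev, Set.mem_setOf_eq, mem_idl]
  constructor
  · rintro ⟨y, hy, hxy⟩
    rw [min_char (le_of_lt hbm) (le_refl m)] at hy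
    rw [le_iff] at hxy
    have h2m := y.2.isLt
    have hx2 := x.1.isLt
    have hy2 := y.1.isLt
    split <;> rcases hy with ⟨h1, h2⟩ | ⟨h1, h2, h3⟩ <;> omega
  · intro hx
    refine ⟨(⟨1, by omega⟩, ⟨b, hbm⟩), ?_, ?_⟩
    · rw [min_char (le_of_lt hbm) (le_refl m)]; right; simp; omega
    · rw [le_iff]
      rw [ite_self] at hx
      rcases fin2_cases x.1 with hx1 | hx1 <;> simp [hx1] <;> omega

lemma XRev_idl4 {m : ℕ} : XRev (idl m m m) = idl m 0 0 := by
  ext x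
  simp only [XRev, Set.mem_setOf_eq, mem_idl]
  constructor
  · rintro ⟨y, hy, hxy⟩
    rw [min_char (le_refl m) (le_refl m)] at hy
    have h2m := y.2.isLt
    rcases hy with ⟨h1, h2⟩ | ⟨h1, h2, h3⟩ <;> omega
  · intro hx
    rw [ite_self] at hx
    omega

/-- First coordinate of the `k`-th element of the rowmotion orbit through `(c,c)`. -/
def pa (m c k : ℕ) : ℕ :=
  if k ≤ m - c then (if k = 0 then c else c + k)
  else (if k = m - c + 1 then m - c else k - 1)

/-- Second coordinate. -/
def pb (m c k : ℕ) : ℕ :=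
  if k ≤ m - c then (if k = 0 then c else k - 1)
  else (if k = m - c + 1 then m - c else k - (m - c + 2))

lemma pseq_cases {m c k : ℕ} (hc : 2 * c < m) (hk : k ≤ m + 1) :
    (k = 0 ∧ pa m c k = c ∧ pb m c k = c) ∨
    (1 ≤ k ∧ k ≤ m - c ∧ pa m c k = c + k ∧ pb m c k = k - 1) ∨
    (k = m - c + 1 ∧ pa m c k = m - c ∧ pb m c k = m - c) ∨
    (m - c + 2 ≤ k ∧ k ≤ m + 1 ∧ pa m c k = k - 1 ∧ pb m c k = k - (m - c + 2)) := by
  unfold pa pb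
  split_ifs <;> first | omega | exact (by assumption : False).elim

lemma pseq_valid {m c k : ℕ} (hc : 2 * c < m) (hk : k ≤ m + 1) :
    pb m c k ≤ pa m c k ∧ pa m c k ≤ m := by
  rcases pseq_cases hc hk with ⟨_, h1, h2⟩ | ⟨_, _, h1, h2⟩ | ⟨_, h1, h2⟩ | ⟨_, _, h1, h2⟩ <;>
    omega

lemma pseq_inj {m c k l : ℕ} (hc : 2 * c < m) (hk : k ≤ m + 1) (hl : l ≤ m + 1)
    (h1 : pa m c k = pa m c l) (h2 : pb m c k = pb m c l) : k = l := by
  rcases pseq_cases hc hk with ⟨e0, e1, e2⟩ | ⟨e0, e0', e1, e2⟩ | ⟨e0, e1, e2⟩ | ⟨e0, e0', e1, e2⟩ <;>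
    rcases pseq_cases hc hl with ⟨f0, f1, f2⟩ | ⟨f0, f0', f1, f2⟩ | ⟨f0, f1, f2⟩ | ⟨f0, f0', f1, f2⟩ <;>
    omega

lemma pseq_orbit_inj {m c c' k : ℕ} (hc : 2 * c < m) (hc' : 2 * c' < m) (hk : k ≤ m + 1)
    (h1 : pa m c' k = c) (h2 : pb m c' k = c) : c = c' := by
  rcases pseq_cases hc' hk with ⟨e0, e1, e2⟩ | ⟨e0, e0', e1, e2⟩ | ⟨e0, e1, e2⟩ | ⟨e0, e0', e1, e2⟩ <;>
    omega

lemma coverage {m a b : ℕ} (hm : Odd m) (hba : b ≤ a) (ham : a ≤ m) :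
    ∃ c k, 2 * c < m ∧ k ≤ m + 1 ∧ pa m c k = a ∧ pb m c k = b := by
  obtain ⟨t, ht⟩ := hm
  rcases Nat.eq_or_lt_of_le hba with he | hlt
  · -- a = b : diagonal point
    subst he
    rcases Nat.lt_or_ge (2 * b) m with h | h
    · exact ⟨b, 0, h, by omega, by unfold pa; split_ifs <;> first | omega | exact (by assumption : False).elim,
        by unfold pb; split_ifs <;> first | omega | exact (by assumption : False).elim⟩
    · have h' : 2 * (m - b) < m := by omega
      have key : m - (m - b) = b := by omega
      refine ⟨m - b, m - (m - b) + 1, h', by omega, ?_, ?_⟩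
      · unfold pa; rw [key]; split_ifs <;> first | omega | exact (by assumption : False).elim
      · unfold pb; rw [key]; split_ifs <;> first | omega | exact (by assumption : False).elim
  · -- b < a
    obtain ⟨c', rfl⟩ : ∃ c', a = c' + b + 1 := ⟨a - b - 1, by omega⟩
    rcases Nat.lt_or_ge (2 * c') m with h | h
    · refine ⟨c', b + 1, h, by omega, ?_, ?_⟩
      · unfold pa; split_ifs <;> first | omega | exact (by assumption : False).elim
      · unfold pb; split_ifs <;> first | omega | exact (by assumption : False).elim
    · have h' : 2 * (m - c') < m := by omega
      have key : m - (m - c') = c' := by omega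
      refine ⟨m - c', c' + 2 + b, h', by omega, ?_, ?_⟩
      · unfold pa; rw [key]; split_ifs <;> first | omega | exact (by assumption : False).elim
      · unfold pb; rw [key]; split_ifs <;> first | omega | exact (by assumption : False).elim

lemma sum_unique {m c : ℕ} (hm : Odd m) (hc : 2 * c < m) :
    ∃ k₀, k₀ ≤ m + 1 ∧ pa m c k₀ + pb m c k₀ = m ∧
      ∀ k ≤ m + 1, pa m c k + pb m c k = m → k = k₀ := by
  obtain ⟨t, ht⟩ := hm
  rcases Nat.even_or_odd c with ⟨u, hu⟩ | ⟨u, hu⟩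
  · -- c = 2u : Lagrangian in first segment at k₀ = t + 1 - u
    refine ⟨t + 1 - u, by omega, ?_, ?_⟩
    · unfold pa pb; split_ifs <;> first | omega | exact (by assumption : False).elim
    · intro k hk hsum
      rcases pseq_cases hc hk with ⟨e0, e1, e2⟩ | ⟨e0, e0', e1, e2⟩ | ⟨e0, e1, e2⟩ |
        ⟨e0, e0', e1, e2⟩ <;> omega
  · -- c = 2u+1 : Lagrangian in second segment at k₀ = m - c + 2 + u
    refine ⟨m - c + 2 + u, by omega, ?_, ?_⟩
    · unfold pa pb; split_ifs <;> first | omega | exact (by assumption : False).elim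
    · intro k hk hsum
      rcases pseq_cases hc hk with ⟨e0, e1, e2⟩ | ⟨e0, e0', e1, e2⟩ | ⟨e0, e1, e2⟩ |
        ⟨e0, e0', e1, e2⟩ <;> omega

lemma step_lt {m c k : ℕ} (hc : 2 * c < m) (hk : k < m + 1) :
    XRev (idl m (pa m c k) (pb m c k)) = idl m (pa m c (k+1)) (pb m c (k+1)) := by
  rcases pseq_cases hc (show k ≤ m+1 by omega) with ⟨h0, e1, e2⟩ | ⟨h1, h2, e1, e2⟩ | ⟨h0, e1, e2⟩ |
    ⟨h1, h2, e1, e2⟩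
  · obtain ⟨f1, f2⟩ : pa m c (k+1) = c + 1 ∧ pb m c (k+1) = 0 := by
      unfold pa pb; split_ifs <;> first | exact (by assumption : False).elim | (constructor <;> omega) | omega
    rw [e1, e2, f1, f2, XRev_idl2 (show c < m by omega)]
  · rcases Nat.lt_or_ge k (m - c) with hlt | hge
    · obtain ⟨f1, f2⟩ : pa m c (k+1) = (c + k) + 1 ∧ pb m c (k+1) = (k-1) + 1 := by
        unfold pa pb; split_ifs <;> first | exact (by assumption : False).elim | (constructor <;> omega) | omega
      rw [e1, e2, f1, f2, XRev_idl1 (show k-1 < c+k by omega) (show c+k < m by omega)]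
    · have hck : c + k = m := by omega
      obtain ⟨f1, f2⟩ : pa m c (k+1) = (k-1) + 1 ∧ pb m c (k+1) = (k-1) + 1 := by
        unfold pa pb; split_ifs <;> first | exact (by assumption : False).elim | (constructor <;> omega) | omega
      rw [e1, e2, f1, f2, hck, XRev_idl3 (show k-1 < m by omega)]
  · have hc1 : 1 ≤ c := by omega
    obtain ⟨f1, f2⟩ : pa m c (k+1) = (m - c) + 1 ∧ pb m c (k+1) = 0 := by
      unfold pa pb; split_ifs <;> first | exact (by assumption : False).elim | (constructor <;> omega) | omega
    rw [e1, e2, f1, f2, XRev_idl2 (show m - c < m by omega)]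
  · obtain ⟨f1, f2⟩ : pa m c (k+1) = (k-1) + 1 ∧ pb m c (k+1) = (k - (m-c+2)) + 1 := by
      unfold pa pb; split_ifs <;> first | exact (by assumption : False).elim | (constructor <;> omega) | omega
    rw [e1, e2, f1, f2,
      XRev_idl1 (show k - (m-c+2) < k-1 by omega) (show k-1 < m by omega)]

lemma step_top {m c : ℕ} (hc : 2 * c < m) :
    XRev (idl m (pa m c (m+1)) (pb m c (m+1))) = idl m (pa m c 0) (pb m c 0) := by
  by_cases hc0 : c = 0
  · subst hc0
    obtain ⟨e1, e2⟩ : pa m 0 (m+1) = m ∧ pb m 0 (m+1) = m := by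
      unfold pa pb; split_ifs <;> first | exact (by assumption : False).elim | (constructor <;> omega) | omega
    obtain ⟨f1, f2⟩ : pa m 0 0 = 0 ∧ pb m 0 0 = 0 := by
      unfold pa pb; split_ifs <;> first | exact (by assumption : False).elim | (constructor <;> omega) | omega
    rw [e1, e2, f1, f2, XRev_idl4]
  · obtain ⟨e1, e2⟩ : pa m c (m+1) = m ∧ pb m c (m+1) = c - 1 := by
      unfold pa pb; split_ifs <;> first | exact (by assumption : False).elim | (constructor <;> omega) | omega
    obtain ⟨f1, f2⟩ : pa m c 0 = (c-1) + 1 ∧ pb m c 0 = (c-1) + 1 := by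
      unfold pa pb; split_ifs <;> first | exact (by assumption : False).elim | (constructor <;> omega) | omega
    rw [e1, e2, f1, f2, XRev_idl3 (show c - 1 < m by omega)]

lemma iter {m c : ℕ} (hc : 2 * c < m) (j k : ℕ) (hk : k ≤ m + 1) :
    XRev^[j] (idl m (pa m c k) (pb m c k)) =
      idl m (pa m c ((k+j) % (m+2))) (pb m c ((k+j) % (m+2))) := by
  induction j with
  | zero => simp [Nat.mod_eq_of_lt (show k < m+2 by omega)]
  | succ j ih =>
    rw [Function.iterate_succ_apply', ih]
    have hrlt : (k+j) % (m+2) < m + 2 := Nat.mod_lt _ (by omega)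
    have hnext : (k + (j+1)) % (m+2) =
        if (k+j) % (m+2) = m+1 then 0 else (k+j) % (m+2) + 1 := by
      have h1 : k + (j+1) = (k+j) + 1 := by ring
      rw [h1, Nat.add_mod (k+j) 1 (m+2)]
      have h2 : 1 % (m+2) = 1 := Nat.mod_eq_of_lt (by omega)
      rw [h2]
      split_ifs with h
      · rw [h]
        have : m + 1 + 1 = m + 2 := rfl
        rw [this, Nat.mod_self]
      · exact Nat.mod_eq_of_lt (by omega)
    rw [hnext]
    split_ifs with h
    · rw [h]
      exact step_top hc
    · exact step_lt hc (by omega)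

/-- The orbit set of the `c`-th orbit. -/
def orbS (m c : ℕ) : Set (Set (Fin 2 × Fin m)) :=
  {J | ∃ l ≤ m + 1, J = idl m (pa m c l) (pb m c l)}

lemma orbit_eq {m c k : ℕ} (hc : 2 * c < m) (hk : k ≤ m + 1) :
    XOrbit (idl m (pa m c k) (pb m c k)) = orbS m c := by
  ext J
  simp only [XOrbit, orbS, Set.mem_setOf_eq]
  constructor
  · rintro ⟨j, rfl⟩
    have hlt : (k+j) % (m+2) < m + 2 := Nat.mod_lt _ (by omega)
    exact ⟨(k+j) % (m+2), by omega, (iter hc j k hk)⟩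
  · rintro ⟨l, hl, rfl⟩
    refine ⟨(m+2) + l - k, ?_⟩
    have h1 : k + ((m+2) + l - k) = (m+2) + l := by omega
    have h2 : (k + ((m+2) + l - k)) % (m+2) = l := by
      rw [h1, Nat.add_mod_left]
      exact Nat.mod_eq_of_lt (by omega)
    rw [iter hc _ k hk, h2]

lemma orbS_ncard {m c : ℕ} (hc : 2 * c < m) : (orbS m c).ncard = m + 2 := by
  classical
  have heq : orbS m c =
      ↑((Finset.Iic (m+1)).image (fun l => idl m (pa m c l) (pb m c l))) := by
    ext J
    simp only [orbS, Set.mem_setOf_eq, Finset.coe_image, Set.mem_image, Finset.mem_coe,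
      Finset.mem_Iic]
    constructor
    · rintro ⟨l, hl, rfl⟩; exact ⟨l, hl, rfl⟩
    · rintro ⟨l, hl, rfl⟩; exact ⟨l, hl, rfl⟩
  rw [heq, Set.ncard_coe_finset, Finset.card_image_of_injOn, Nat.card_Iic]
  intro k hk l hl h
  simp only [Finset.mem_coe, Finset.mem_Iic] at hk hl
  obtain ⟨hv1, hv2⟩ := pseq_valid hc hk
  obtain ⟨hw1, hw2⟩ := pseq_valid hc hl
  obtain ⟨h1, h2⟩ := idl_inj (by omega) (by omega) (by omega) (by omega) h
  exact pseq_inj hc hk hl h1 h2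

lemma pa0 {m c : ℕ} (hc : 2 * c < m) : pa m c 0 = c := by
  unfold pa; split_ifs <;> omega

lemma pb0 {m c : ℕ} (hc : 2 * c < m) : pb m c 0 = c := by
  unfold pb; split_ifs <;> omega

end S7


/-- For `P = [2] × [2n-3]` (the product of a 2-element chain and a
`(2n-3)`-element chain, componentwise order, realized as `Fin 2 × Fin (2n-3)`),
the reverse operator `𝔛` on the lower sets of `P` has exactly `n-1` orbits,
each orbit has exactly `2n-1` elements, and each orbit contains exactly one
lower set of cardinality `2n-3`. -/
theorem stmt7 (n : ℕ) (hn : 3 ≤ n) :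
    Set.ncard {O : Set (Set (Fin 2 × Fin (2 * n - 3))) |
        ∃ I : Set (Fin 2 × Fin (2 * n - 3)), IsLowerSet I ∧ O = XOrbit I} = n - 1 ∧
      ∀ I : Set (Fin 2 × Fin (2 * n - 3)), IsLowerSet I →
        (XOrbit I).ncard = 2 * n - 1 ∧
          (∃! J : Set (Fin 2 × Fin (2 * n - 3)), J ∈ XOrbit I ∧ J.ncard = 2 * n - 3) := by
  classical
  open S7 in
  set m : ℕ := 2 * n - 3 with hm
  have hodd : Odd m := ⟨n - 2, by omega⟩
  have hm3 : 3 ≤ m := by omega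
  -- the key: every lower set's orbit is some orbS
  have key : ∀ I : Set (Fin 2 × Fin m), IsLowerSet I →
      ∃ c, 2 * c < m ∧ XOrbit I = orbS m c := by
    intro I hI
    obtain ⟨a, b, hba, ham, rfl⟩ := lower_classify hI
    obtain ⟨c, k, hc, hk, hpa, hpb⟩ := coverage hodd hba ham
    refine ⟨c, hc, ?_⟩
    rw [← hpa, ← hpb]
    exact orbit_eq hc hk
  constructor
  · -- number of orbits
    have heq : {O : Set (Set (Fin 2 × Fin m)) |
        ∃ I : Set (Fin 2 × Fin m), IsLowerSet I ∧ O = XOrbit I} =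
        ↑((Finset.Iic (n-3+1)).image (fun c => orbS m c)) := by
      ext O
      simp only [Set.mem_setOf_eq, Finset.coe_image, Set.mem_image, Finset.mem_coe,
        Finset.mem_Iic]
      constructor
      · rintro ⟨I, hI, rfl⟩
        obtain ⟨c, hc, horb⟩ := key I hI
        exact ⟨c, by omega, horb.symm⟩
      · rintro ⟨c, hc, rfl⟩
        have hc' : 2 * c < m := by omega
        refine ⟨idl m (pa m c 0) (pb m c 0), ?_, (orbit_eq hc' (by omega)).symm⟩
        exact idl_lower (pseq_valid hc' (by omega)).1
    rw [heq, Set.ncard_coe_finset, Finset.card_image_of_injOn, Nat.card_Iic]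
    · omega
    · intro c hcm c' hcm' h
      simp only [Finset.mem_coe, Finset.mem_Iic] at hcm hcm'
      have hc : 2 * c < m := by omega
      have hc' : 2 * c' < m := by omega
      have hmem : idl m c c ∈ orbS m c := by
        refine ⟨0, by omega, ?_⟩
        rw [pa0 hc, pb0 hc]
      have h' : orbS m c = orbS m c' := h
      rw [h'] at hmem
      obtain ⟨l, hl, hle⟩ := hmem
      obtain ⟨hv1, hv2⟩ := pseq_valid hc' hl
      obtain ⟨h1, h2⟩ := idl_inj (by omega) (by omega) (by omega) (by omega) hle
      exact pseq_orbit_inj hc hc' hl h1.symm h2.symm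
  · intro I hI
    obtain ⟨c, hc, horb⟩ := key I hI
    rw [horb]
    constructor
    · rw [orbS_ncard hc]; omega
    · obtain ⟨k₀, hk₀, hsum, huniq⟩ := sum_unique hodd hc
      refine ⟨idl m (pa m c k₀) (pb m c k₀), ⟨⟨k₀, hk₀, rfl⟩, ?_⟩, ?_⟩
      · obtain ⟨hv1, hv2⟩ := pseq_valid hc hk₀
        rw [ncard_idl (by omega) (by omega)]
        omega
      · rintro J ⟨⟨l, hl, rfl⟩, hcard⟩
        obtain ⟨hv1, hv2⟩ := pseq_valid hc hl
        rw [ncard_idl (by omega) (by omega)] at hcard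
        have : l = k₀ := huniq l hl (by omega)
        rw [this]
end

section
/- Let n ≥ 3, let P = [2] × [2n−3], and identify lower sets of P with pairs (I_1, I_2) of lower sets of the chain [2n−3] with I_2 ⊆ I_1; write L_j = {1, …, j} ⊆ [2n−3]. Then for every i with 0 ≤ i ≤ n−2, the orbit of the lower set (L_i, L_i) under the reverse operator 𝔛 of P has exactly 2n−1 elements; moreover 𝔛^{2n−1}(L_i, L_i) = (L_i, L_i). -/
/-- The lower set of `[2] × P` corresponding to a pair `(I₁, I₂)` of lower sets
of `P` with `I₂ ⊆ I₁`: coordinate `0` (the bottom of the chain `[2]`) carries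
`I₁` and coordinate `1` carries `I₂`. -/
def pairSet {β : Type*} (I₁ I₂ : Set β) : Set (Fin 2 × β) :=
  {p | if p.1 = 0 then p.2 ∈ I₁ else p.2 ∈ I₂}

/-- The lower set `L_j = {1, …, j}` of the chain `[k]` realized as `Fin k`. -/
def chainL (k j : ℕ) : Set (Fin k) := {x | (x : ℕ) < j}


/- ### Auxiliary development -/

/-- Numeric model of the reverse operator on pairs `(a, b)` encoding the lower
set `pairSet (chainL m a) (chainL m b)` with `b ≤ a ≤ m`: first component. -/
def stepA (m a b : ℕ) : ℕ :=
  if a < m then a + 1 else (if b < m then b + 1 else 0)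

/-- Second component of the numeric model of the reverse operator. -/
def stepB (m a b : ℕ) : ℕ :=
  if a < m then (if b < a then b + 1 else 0) else (if b < m then b + 1 else 0)

/-- The numeric model of the reverse operator. -/
def stepF (m : ℕ) (p : ℕ × ℕ) : ℕ × ℕ := (stepA m p.1 p.2, stepB m p.1 p.2)

lemma mem_pair {m a b : ℕ} {p : Fin 2 × Fin m} :
    p ∈ pairSet (chainL m a) (chainL m b) ↔
      (if (p.1 : ℕ) = 0 then (p.2 : ℕ) < a else (p.2 : ℕ) < b) := by
  unfold pairSet chainL
  simp only [Set.mem_setOf_eq, Fin.ext_iff, Fin.val_zero]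

lemma mem_pair_compl {m a b : ℕ} {p : Fin 2 × Fin m} :
    p ∈ (pairSet (chainL m a) (chainL m b))ᶜ ↔
      (if (p.1 : ℕ) = 0 then a ≤ (p.2 : ℕ) else b ≤ (p.2 : ℕ)) := by
  rw [Set.mem_compl_iff, mem_pair]
  split_ifs <;> omega

lemma prod_le_iff {m : ℕ} {p q : Fin 2 × Fin m} :
    p ≤ q ↔ (p.1 : ℕ) ≤ (q.1 : ℕ) ∧ (p.2 : ℕ) ≤ (q.2 : ℕ) := by
  rw [Prod.le_def, Fin.le_def, Fin.le_def]

lemma minimal_char {m a b : ℕ} (hba : b ≤ a) (y : Fin 2 × Fin m) :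
    Minimal (fun z => z ∈ (pairSet (chainL m a) (chainL m b))ᶜ) y ↔
      ((y.1 : ℕ) = 0 ∧ (y.2 : ℕ) = a) ∨ ((y.1 : ℕ) = 1 ∧ (y.2 : ℕ) = b ∧ b < a) := by
  have hy1 : (y.1 : ℕ) < 2 := y.1.isLt
  have hy2 : (y.2 : ℕ) < m := y.2.isLt
  constructor
  · rintro ⟨hy, hmin⟩
    replace hy := mem_pair_compl.mp hy
    by_cases h0 : (y.1 : ℕ) = 0
    · rw [if_pos h0] at hy
      have ham : a < m := lt_of_le_of_lt hy hy2
      have hz : ((0 : Fin 2), (⟨a, ham⟩ : Fin m)) ∈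
          (pairSet (chainL m a) (chainL m b))ᶜ := by
        rw [mem_pair_compl]; simp
      have hle : ((0 : Fin 2), (⟨a, ham⟩ : Fin m)) ≤ y := by
        rw [prod_le_iff]; exact ⟨by simp, hy⟩
      have := hmin hz hle
      rw [prod_le_iff] at this
      exact Or.inl ⟨h0, le_antisymm this.2 hy⟩
    · have h1 : (y.1 : ℕ) = 1 := by omega
      rw [if_neg h0] at hy
      have hbm : b < m := lt_of_le_of_lt hy hy2
      rcases lt_or_eq_of_le hba with hlt | heq
      · have hz : ((1 : Fin 2), (⟨b, hbm⟩ : Fin m)) ∈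
            (pairSet (chainL m a) (chainL m b))ᶜ := by
          rw [mem_pair_compl]; simp
        have hle : ((1 : Fin 2), (⟨b, hbm⟩ : Fin m)) ≤ y := by
          rw [prod_le_iff]; exact ⟨by omega, hy⟩
        have := hmin hz hle
        rw [prod_le_iff] at this
        exact Or.inr ⟨h1, le_antisymm this.2 hy, hlt⟩
      · have hz : ((0 : Fin 2), (⟨b, hbm⟩ : Fin m)) ∈
            (pairSet (chainL m a) (chainL m b))ᶜ := by
          rw [mem_pair_compl]; simp [← heq]
        have hle : ((0 : Fin 2), (⟨b, hbm⟩ : Fin m)) ≤ y := by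
          rw [prod_le_iff]; exact ⟨by simp, hy⟩
        have := hmin hz hle
        rw [prod_le_iff] at this
        simp only [Fin.val_zero] at this
        omega
  · rintro (⟨h0, ha⟩ | ⟨h1, hb, hba'⟩)
    · refine ⟨mem_pair_compl.mpr ?_, ?_⟩
      · rw [if_pos h0]; omega
      · intro z hz hzle
        replace hz := mem_pair_compl.mp hz
        rw [prod_le_iff] at hzle
        have hz0 : (z.1 : ℕ) = 0 := by omega
        rw [if_pos hz0] at hz
        rw [prod_le_iff]
        omega
    · refine ⟨mem_pair_compl.mpr ?_, ?_⟩
      · rw [if_neg (by omega)]; omega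
      · intro z hz hzle
        replace hz := mem_pair_compl.mp hz
        rw [prod_le_iff] at hzle
        have hz2 : (z.1 : ℕ) < 2 := z.1.isLt
        rw [prod_le_iff]
        by_cases hz0 : (z.1 : ℕ) = 0
        · rw [if_pos hz0] at hz; omega
        · rw [if_neg hz0] at hz; omega

lemma xrev_mem {m a b : ℕ} (hba : b ≤ a) (ham : a ≤ m) (p : Fin 2 × Fin m) :
    p ∈ XRev (pairSet (chainL m a) (chainL m b)) ↔
      (a < m ∧ (p.1 : ℕ) = 0 ∧ (p.2 : ℕ) ≤ a) ∨ (b < a ∧ (p.2 : ℕ) ≤ b) := by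
  simp only [XRev, Set.mem_setOf_eq]
  constructor
  · rintro ⟨y, hy, hle⟩
    rw [minimal_char hba] at hy
    rw [prod_le_iff] at hle
    rcases hy with ⟨h0, ha⟩ | ⟨h1, hb, hba'⟩
    · have := y.2.isLt
      exact Or.inl ⟨by omega, by omega, by omega⟩
    · exact Or.inr ⟨hba', by omega⟩
  · rintro (⟨ham', hp0, hpa⟩ | ⟨hba', hpb⟩)
    · exact ⟨((0 : Fin 2), ⟨a, ham'⟩), (minimal_char hba _).2 (Or.inl ⟨rfl, rfl⟩),
        prod_le_iff.2 ⟨by omega, hpa⟩⟩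
    · have hbm : b < m := lt_of_lt_of_le hba' ham
      have hp1 : (p.1 : ℕ) < 2 := p.1.isLt
      exact ⟨((1 : Fin 2), ⟨b, hbm⟩), (minimal_char hba _).2 (Or.inr ⟨rfl, rfl, hba'⟩),
        prod_le_iff.2 ⟨by simp; omega, hpb⟩⟩

lemma xrev_eq (m a b : ℕ) (hba : b ≤ a) (ham : a ≤ m) :
    XRev (pairSet (chainL m a) (chainL m b)) =
      pairSet (chainL m (stepA m a b)) (chainL m (stepB m a b)) := by
  ext p
  have hp1 : (p.1 : ℕ) < 2 := p.1.isLt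
  have hp2 : (p.2 : ℕ) < m := p.2.isLt
  rw [xrev_mem hba ham, mem_pair]
  unfold stepA stepB
  split_ifs <;> omega

/-- Closed form for the orbit of `(i, i)` under `stepF m`: first component. -/
def GA (m i k : ℕ) : ℕ :=
  if k = 0 then i
  else if k = m + 2 then i
  else if k ≤ m - i then i + k
  else if k = m - i + 1 then m - i
  else k - 1

/-- Closed form for the orbit of `(i, i)` under `stepF m`: second component. -/
def GB (m i k : ℕ) : ℕ :=
  if k = 0 then i
  else if k = m + 2 then i
  else if k ≤ m - i then k - 1
  else if k = m - i + 1 then m - i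
  else k - (m - i) - 2

/-- Closed form for the orbit of `(i, i)` under `stepF m`. -/
def Gfun (m i k : ℕ) : ℕ × ℕ := (GA m i k, GB m i k)

set_option maxHeartbeats 2000000 in
lemma step_G (m i : ℕ) (h2i : 2 * i < m) :
    ∀ k ≤ m + 1, stepF m (Gfun m i k) = Gfun m i (k + 1) := by
  intro k hk
  have hA : stepA m (GA m i k) (GB m i k) = GA m i (k + 1) := by
    unfold stepA GA GB
    split_ifs <;> (try contradiction) <;> omega
  have hB : stepB m (GA m i k) (GB m i k) = GB m i (k + 1) := by
    unfold stepB GA GB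
    split_ifs <;> (try contradiction) <;> omega
  rw [Gfun, Gfun, stepF]
  exact Prod.ext hA hB

lemma G_iter (m i : ℕ) (h2i : 2 * i < m) :
    ∀ k ≤ m + 2, (stepF m)^[k] (i, i) = Gfun m i k := by
  intro k hk
  induction k with
  | zero => simp [Gfun, GA, GB]
  | succ k ih =>
    rw [Function.iterate_succ_apply', ih (by omega), step_G m i h2i k (by omega)]

lemma G_inj (m i : ℕ) (h2i : 2 * i < m) :
    ∀ k l, k ≤ m + 1 → l ≤ m + 1 → Gfun m i k = Gfun m i l → k = l := by
  intro k l hk hl h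
  rw [Gfun, Gfun, Prod.ext_iff] at h
  obtain ⟨hA, hB⟩ := h
  unfold GA at hA
  unfold GB at hB
  split_ifs at hA hB <;> omega

lemma inv_iter (m i : ℕ) (him : i ≤ m) :
    ∀ k, ((stepF m)^[k] (i, i)).2 ≤ ((stepF m)^[k] (i, i)).1 ∧
      ((stepF m)^[k] (i, i)).1 ≤ m := by
  intro k
  induction k with
  | zero => simpa using him
  | succ k ih =>
    rw [Function.iterate_succ_apply']
    obtain ⟨h1, h2⟩ := ih
    set q := (stepF m)^[k] (i, i)
    show stepB m q.1 q.2 ≤ stepA m q.1 q.2 ∧ stepA m q.1 q.2 ≤ m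
    unfold stepA stepB
    constructor <;> split_ifs <;> omega

lemma xrev_iter (m i : ℕ) (him : i ≤ m) :
    ∀ k, XRev^[k] (pairSet (chainL m i) (chainL m i)) =
      pairSet (chainL m ((stepF m)^[k] (i, i)).1) (chainL m ((stepF m)^[k] (i, i)).2) := by
  intro k
  induction k with
  | zero => simp
  | succ k ih =>
    rw [Function.iterate_succ_apply', ih, Function.iterate_succ_apply']
    obtain ⟨h1, h2⟩ := inv_iter m i him k
    rw [xrev_eq m _ _ h1 h2]
    rfl

lemma chainL_pair_inj {m a b a' b' : ℕ} (ha : a ≤ m) (hb : b ≤ m) (ha' : a' ≤ m) (hb' : b' ≤ m)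
    (h : pairSet (chainL m a) (chainL m b) = pairSet (chainL m a') (chainL m b')) :
    a = a' ∧ b = b' := by
  have h1 : ∀ x, x < m → ((x : ℕ) < a ↔ x < a') := by
    intro x hx
    have := Set.ext_iff.mp h ((0 : Fin 2), ⟨x, hx⟩)
    rw [mem_pair, mem_pair] at this
    simpa using this
  have h2 : ∀ x, x < m → ((x : ℕ) < b ↔ x < b') := by
    intro x hx
    have := Set.ext_iff.mp h ((1 : Fin 2), ⟨x, hx⟩)
    rw [mem_pair, mem_pair] at this
    simpa using this
  constructor
  · by_contra hne
    rcases lt_or_gt_of_ne hne with hlt | hgt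
    · have := (h1 a (by omega)).mpr hlt; omega
    · have := (h1 a' (by omega)).mp hgt; omega
  · by_contra hne
    rcases lt_or_gt_of_ne hne with hlt | hgt
    · have := (h2 b (by omega)).mpr hlt; omega
    · have := (h2 b' (by omega)).mp hgt; omega

/-- For `P = [2] × [2n-3]` and `0 ≤ i ≤ n-2`, the `𝔛`-orbit of the lower set
`(L_i, L_i)` has exactly `2n-1` elements; moreover `𝔛^[2n-1] (L_i, L_i) = (L_i, L_i)`. -/
theorem stmt8 (n : ℕ) (hn : 3 ≤ n) (i : ℕ) (hi : i ≤ n - 2) :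
    (XOrbit (pairSet (chainL (2 * n - 3) i) (chainL (2 * n - 3) i))).ncard = 2 * n - 1 ∧
      XRev^[2 * n - 1] (pairSet (chainL (2 * n - 3) i) (chainL (2 * n - 3) i))
        = pairSet (chainL (2 * n - 3) i) (chainL (2 * n - 3) i) := by
  classical
  set m := 2 * n - 3 with hm
  have h2i : 2 * i < m := by omega
  have him : i ≤ m := by omega
  have h21 : 2 * n - 1 = m + 2 := by omega
  set I₀ := pairSet (chainL m i) (chainL m i) with hI₀
  have hXG : ∀ k ≤ m + 2, XRev^[k] I₀ =
      pairSet (chainL m (Gfun m i k).1) (chainL m (Gfun m i k).2) := by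
    intro k hk
    rw [xrev_iter m i him k, G_iter m i h2i k hk]
  have hperiod : XRev^[m + 2] I₀ = I₀ := by
    rw [hXG (m + 2) le_rfl]
    simp [Gfun, GA, GB, hI₀]
  have hper : Function.IsPeriodicPt XRev (m + 2) I₀ := hperiod
  have horb : XOrbit I₀ = ↑((Finset.range (m + 2)).image (fun k => XRev^[k] I₀)) := by
    ext J
    simp only [XOrbit, Set.mem_setOf_eq, Finset.coe_image, Set.mem_image,
      Finset.mem_coe, Finset.mem_range]
    constructor
    · rintro ⟨k, rfl⟩
      exact ⟨k % (m + 2), Nat.mod_lt _ (by omega), hper.iterate_mod_apply k⟩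
    · rintro ⟨k, _, rfl⟩
      exact ⟨k, rfl⟩
  constructor
  · rw [horb, Set.ncard_coe_finset, Finset.card_image_of_injOn, Finset.card_range, h21]
    intro k hk l hl h
    simp only [Finset.coe_range, Set.mem_Iio] at hk hl
    have h' : XRev^[k] I₀ = XRev^[l] I₀ := h
    rw [hXG k (by omega), hXG l (by omega)] at h'
    have hbk := inv_iter m i him k
    have hbl := inv_iter m i him l
    rw [G_iter m i h2i k (by omega)] at hbk
    rw [G_iter m i h2i l (by omega)] at hbl
    obtain ⟨e1, e2⟩ := chainL_pair_inj (by omega) (by omega) (by omega) (by omega) h'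
    exact G_inj m i h2i k l (by omega) (by omega) (Prod.ext e1 e2)
  · rw [h21]
    exact hperiod
end

section
/- Let n ≥ 2 and let K_{n−1} be the poset [n−1] ⊕ ([1] ⊔ [1]) ⊕ [n−1]. Then the poset [2] × K_{n−1} has exactly (n+2)(2n+1) lower sets. -/
namespace Stmt9Aux

open Finset

lemma rank_eq_n {n : ℕ} (x : KType n) (h : x.1.2 = true) : x.1.1 = n := by
  by_contra hne
  have := x.2.2.2 hne
  rw [h] at this
  cases this

/-- decode a code `(a, b)` to a subset of `KType n`. -/
def decodeK (n : ℕ) (c : ℕ × Bool) : Set (KType n) :=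
  {x | if x.1.2 = true then c.2 = true else x.1.1 ≤ c.1}

def validK (n : ℕ) (c : ℕ × Bool) : Prop :=
  if c.2 = true then n - 1 ≤ c.1 ∧ c.1 ≤ 2 * n - 1 else c.1 ≤ n

/-- the element n' -/
def eT (n : ℕ) (hn : 1 ≤ n) : KType n :=
  ⟨(n, true), by refine ⟨hn, by omega, fun h => absurd rfl h⟩⟩

/-- the tag-false element of rank r -/
def eF (n r : ℕ) (h1 : 1 ≤ r) (h2 : r ≤ 2 * n - 1) : KType n :=
  ⟨(r, false), ⟨h1, h2, fun _ => rfl⟩⟩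

lemma decodeK_lower {n : ℕ} {c : ℕ × Bool} (hn : 2 ≤ n) (hc : validK n c) :
    IsLowerSet (decodeK n c) := by
  intro y x hxy hy
  rcases hxy with rfl | hlt
  · exact hy
  · simp only [decodeK, Set.mem_setOf_eq, validK] at *
    rcases hb : x.1.2 with _ | _ <;> rcases hb' : y.1.2 with _ | _ <;>
        simp only [hb, hb', if_true, if_false, Bool.false_eq_true] at hy hc ⊢
    · omega
    · have hyn := rank_eq_n y hb'
      rw [hy] at hc
      simp only [if_true] at hc
      omega
    · have hxn := rank_eq_n x hb
      by_contra hcb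
      have hcb' : c.2 = false := by
        cases hc2 : c.2
        · rfl
        · exact absurd hc2 hcb
      rw [hcb'] at hc
      simp only [Bool.false_eq_true, if_false] at hc
      omega
    · exact hy

lemma decodeK_mono {n : ℕ} {c c' : ℕ × Bool} (h1 : c.1 ≤ c'.1)
    (h2 : c.2 = true → c'.2 = true) : decodeK n c ⊆ decodeK n c' := by
  intro x hx
  simp only [decodeK, Set.mem_setOf_eq] at *
  by_cases h : x.1.2 = true
  · rw [if_pos h] at hx ⊢; exact h2 hx
  · rw [if_neg h] at hx ⊢; omega

lemma mem_decodeK_eT {n : ℕ} (hn : 1 ≤ n) (c : ℕ × Bool) :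
    eT n hn ∈ decodeK n c ↔ c.2 = true := by
  show (if (n, true).2 = true then c.2 = true else (n, true).1 ≤ c.1) ↔ _
  simp [decodeK, eT]

lemma mem_decodeK_eF {n r : ℕ} (h1 : 1 ≤ r) (h2 : r ≤ 2 * n - 1) (c : ℕ × Bool) :
    eF n r h1 h2 ∈ decodeK n c ↔ r ≤ c.1 := by
  show (if (r, false).2 = true then c.2 = true else (r, false).1 ≤ c.1) ↔ _
  simp [decodeK, eF]

lemma decodeK_subset_iff {n : ℕ} {c c' : ℕ × Bool} (hn : 2 ≤ n)
    (hc : validK n c) (hc' : validK n c') :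
    decodeK n c ⊆ decodeK n c' ↔ c.1 ≤ c'.1 ∧ (c.2 = true → c'.2 = true) := by
  constructor
  · intro hsub
    have hn1 : 1 ≤ n := by omega
    constructor
    · rcases Nat.eq_zero_or_pos c.1 with h0 | hpos
      · omega
      · have hle : c.1 ≤ 2 * n - 1 := by
          simp only [validK] at hc; split at hc <;> omega
        have := hsub ((mem_decodeK_eF hpos hle c).2 le_rfl)
        rw [mem_decodeK_eF] at this
        exact this
    · intro hb
      have := hsub ((mem_decodeK_eT hn1 c).2 hb)
      rw [mem_decodeK_eT] at this
      exact this
  · intro ⟨h1, h2⟩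
    exact decodeK_mono h1 h2

lemma decodeK_injOn {n : ℕ} (hn : 2 ≤ n) {c c' : ℕ × Bool}
    (hc : validK n c) (hc' : validK n c') (h : decodeK n c = decodeK n c') : c = c' := by
  have h1 := (decodeK_subset_iff hn hc hc').1 h.le
  have h2 := (decodeK_subset_iff hn hc' hc).1 h.ge
  have : c.2 = c'.2 := by
    cases hb : c.2 <;> cases hb' : c'.2 <;> simp_all
  exact Prod.ext (le_antisymm h1.1 h2.1) this

/-- classification of lower sets of KType n -/
lemma classifyK {n : ℕ} (hn : 2 ≤ n) {J : Set (KType n)} (hJ : IsLowerSet J) :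
    ∃ c, validK n c ∧ J = decodeK n c := by
  classical
  have hn1 : 1 ≤ n := by omega
  set P : ℕ → Prop := fun r => ∃ x : KType n, x ∈ J ∧ x.1 = (r, false) with hP
  set a := Nat.findGreatest P (2 * n) with ha
  have hPa_of_pos : 0 < a → P a := by
    intro hpos
    rw [ha, Nat.findGreatest_pos] at hpos
    obtain ⟨m, hm1, hm2, hm3⟩ := hpos
    exact Nat.findGreatest_spec hm2 hm3
  have hfalse_mem : ∀ x : KType n, x.1.2 = false → (x ∈ J ↔ x.1.1 ≤ a) := by
    intro x hx2
    constructor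
    · intro hx
      apply Nat.le_findGreatest (by have := x.2.2.1; omega)
      exact ⟨x, hx, Prod.ext rfl hx2⟩
    · intro hle
      have hpos : 0 < a := lt_of_lt_of_le x.2.1 hle
      obtain ⟨y, hy, hy1⟩ := hPa_of_pos hpos
      apply hJ _ hy
      rcases Nat.lt_or_ge x.1.1 a with h | h
      · exact Or.inr (by rw [hy1]; exact h)
      · left
        apply Subtype.ext
        rw [hy1]
        exact Prod.ext (by omega) hx2
  by_cases hb : eT n hn1 ∈ J
  case pos =>
    have hPn1 : P (n - 1) := by
      refine ⟨eF n (n-1) (by omega) (by omega), ?_, rfl⟩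
      apply hJ _ hb
      exact Or.inr (by simp [eF, eT]; omega)
    refine ⟨(a, true), ?_, ?_⟩
    · simp only [validK, if_true]
      refine ⟨Nat.le_findGreatest (by omega) hPn1, ?_⟩
      have hpos : 0 < a := lt_of_lt_of_le (by omega) (Nat.le_findGreatest (by omega) hPn1)
      obtain ⟨x, _, hx⟩ := hPa_of_pos hpos
      have := x.2.2.1
      rw [hx] at this
      exact this
    · ext x
      simp only [decodeK, Set.mem_setOf_eq]
      rcases hx2 : x.1.2 with _ | _
      · simp only [Bool.false_eq_true, if_false]
        exact hfalse_mem x hx2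
      · simp only [if_true, iff_true]
        have : x = eT n hn1 := by
          apply Subtype.ext
          exact Prod.ext (by simpa [eT] using rank_eq_n x hx2) (by simpa [eT] using hx2)
        rw [this]
        exact hb
  case neg =>
    refine ⟨(a, false), ?_, ?_⟩
    · simp only [validK, Bool.false_eq_true, if_false]
      by_contra h
      push_neg at h
      obtain ⟨y, hy, hy1⟩ := hPa_of_pos (by omega)
      apply hb
      apply hJ _ hy
      exact Or.inr (by rw [hy1]; simpa [eT] using h)
    · ext x
      simp only [decodeK, Set.mem_setOf_eq]
      rcases hx2 : x.1.2 with _ | _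
      · simp only [Bool.false_eq_true, if_false]
        exact hfalse_mem x hx2
      · simp only [if_true, Bool.false_eq_true, iff_false]
        intro hx
        apply hb
        have : x = eT n hn1 := by
          apply Subtype.ext
          exact Prod.ext (by simpa [eT] using rank_eq_n x hx2) (by simpa [eT] using hx2)
        rwa [this] at hx

lemma pairSet_lower {β : Type*} [PartialOrder β] {I₁ I₂ : Set β} (h₁ : IsLowerSet I₁)
    (h₂ : IsLowerSet I₂) (hsub : I₂ ⊆ I₁) : IsLowerSet (pairSet I₁ I₂) := by
  rintro ⟨j, y⟩ ⟨i, x⟩ hle hmem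
  obtain ⟨hij, hyx⟩ := hle
  simp only [pairSet, Set.mem_setOf_eq] at hmem ⊢
  by_cases hi : i = 0
  · rw [if_pos hi]
    by_cases hj : j = 0
    · rw [if_pos hj] at hmem
      exact h₁ hyx hmem
    · rw [if_neg hj] at hmem
      exact h₁ hyx (hsub hmem)
  · rw [if_neg hi]
    by_cases hj : j = 0
    · exfalso
      apply hi
      exact le_antisymm (hj ▸ hij) (Fin.zero_le i)
    · rw [if_neg hj] at hmem
      exact h₂ hyx hmem

lemma lower2_decomp {β : Type*} [PartialOrder β] {I : Set (Fin 2 × β)} (hI : IsLowerSet I) :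
    ∃ I₁ I₂ : Set β, IsLowerSet I₁ ∧ IsLowerSet I₂ ∧ I₂ ⊆ I₁ ∧ I = pairSet I₁ I₂ := by
  refine ⟨{x | (0, x) ∈ I}, {x | (1, x) ∈ I}, ?_, ?_, ?_, ?_⟩
  · intro x y hxy hx
    exact hI (Prod.mk_le_mk.2 ⟨le_refl _, hxy⟩) hx
  · intro x y hxy hx
    exact hI (Prod.mk_le_mk.2 ⟨le_refl _, hxy⟩) hx
  · intro x hx
    exact hI (Prod.mk_le_mk.2 ⟨by decide, le_refl x⟩) hx
  · ext ⟨i, x⟩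
    fin_cases i <;> simp [pairSet]

lemma pairSet_inj {β : Type*} {I₁ I₂ I₁' I₂' : Set β}
    (h : pairSet I₁ I₂ = pairSet I₁' I₂') : I₁ = I₁' ∧ I₂ = I₂' := by
  constructor <;> ext x
  · have := Set.ext_iff.1 h (0, x)
    simpa [pairSet] using this
  · have := Set.ext_iff.1 h (1, x)
    simpa [pairSet] using this

def goodPair (n : ℕ) (c : (ℕ × Bool) × (ℕ × Bool)) : Prop :=
  validK n c.1 ∧ validK n c.2 ∧ c.2.1 ≤ c.1.1 ∧ (c.2.2 = true → c.1.2 = true)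

def CP (n : ℕ) : Finset ((ℕ × Bool) × (ℕ × Bool)) :=
  ((range (n+1)).biUnion fun a₁ => (range (a₁+1)).image fun a₂ => ((a₁, false), (a₂, false)))
  ∪ ((range (n+1)).biUnion fun k => (range (k+1)).image fun j => ((n-1+k, true), (n-1+j, true)))
  ∪ ((range (n+1)).biUnion fun k =>
      (range (min (n-1+k) n + 1)).image fun a₂ => ((n-1+k, true), (a₂, false)))

lemma mem_CP {n : ℕ} (hn : 2 ≤ n) (c : (ℕ × Bool) × (ℕ × Bool)) :
    c ∈ CP n ↔ goodPair n c := by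
  obtain ⟨⟨a₁, b₁⟩, ⟨a₂, b₂⟩⟩ := c
  simp only [CP, goodPair, validK, mem_union, mem_biUnion, mem_image, mem_range,
    Prod.mk.injEq]
  cases b₁ <;> cases b₂ <;> simp only [Bool.false_eq_true, Bool.true_eq_false, if_true,
    if_false, and_true, and_false, false_and, true_and, and_self, or_false, false_or,
    exists_false, false_implies, true_implies, not_false_eq_true, imp_false]
  · constructor
    · rintro ⟨x, hx, y, hy, rfl, rfl⟩
      omega
    · rintro ⟨h1, h2, h3⟩
      exact ⟨a₁, by omega, a₂, by omega, rfl, rfl⟩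
  · simp
  · constructor
    · rintro ⟨k, hk, y, hy, rfl, rfl⟩
      omega
    · rintro ⟨⟨h1, h2⟩, h3, h4⟩
      exact ⟨a₁ - (n-1), by omega, a₂, by omega, by omega, rfl⟩
  · constructor
    · rintro ⟨k, hk, j, hj, rfl, rfl⟩
      omega
    · rintro ⟨⟨h1, h2⟩, ⟨h3, h4⟩, h5⟩
      exact ⟨a₁ - (n-1), by omega, a₂ - (n-1), by omega, by omega, by omega⟩

lemma gauss (m : ℕ) : 2 * ∑ a ∈ range m, (a + 1) = m * (m + 1) := by
  induction m with
  | zero => simp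
  | succ k ih =>
    rw [Finset.sum_range_succ, Nat.mul_add, ih]
    ring

lemma card_CP {n : ℕ} (hn : 2 ≤ n) : (CP n).card = (n + 2) * (2 * n + 1) := by
  classical
  have hdisj1 : Disjoint
      ((range (n+1)).biUnion fun a₁ =>
        (range (a₁+1)).image fun a₂ => (((a₁:ℕ), false), ((a₂:ℕ), false)))
      ((range (n+1)).biUnion fun k =>
        (range (k+1)).image fun j => ((n-1+k, true), (n-1+j, true))) := by
    rw [Finset.disjoint_left]
    rintro c hc1 hc2
    simp only [mem_biUnion, mem_image] at hc1 hc2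
    obtain ⟨_, _, _, _, rfl⟩ := hc1
    obtain ⟨_, _, _, _, h⟩ := hc2
    simp at h
  have hdisj2 : Disjoint
      ((((range (n+1)).biUnion fun a₁ =>
        (range (a₁+1)).image fun a₂ => (((a₁:ℕ), false), ((a₂:ℕ), false)))
      ∪ ((range (n+1)).biUnion fun k =>
        (range (k+1)).image fun j => ((n-1+k, true), (n-1+j, true)))))
      ((range (n+1)).biUnion fun k =>
        (range (min (n-1+k) n + 1)).image fun a₂ => ((n-1+k, true), (a₂, false))) := by
    rw [Finset.disjoint_left]
    rintro c hc1 hc2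
    simp only [mem_union, mem_biUnion, mem_image] at hc1 hc2
    obtain ⟨_, _, _, _, rfl⟩ := hc2
    rcases hc1 with ⟨_, _, _, _, h⟩ | ⟨_, _, _, _, h⟩ <;> simp at h
  have e1 : ((range (n+1)).biUnion fun a₁ =>
      (range (a₁+1)).image fun a₂ => (((a₁:ℕ), false), ((a₂:ℕ), false))).card
      = ∑ a₁ ∈ range (n+1), (a₁ + 1) := by
    rw [Finset.card_biUnion]
    · refine Finset.sum_congr rfl fun a₁ _ => ?_
      rw [Finset.card_image_of_injective _ (fun x y h => by simpa using h),
        Finset.card_range]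
    · intro x _ y _ hxy
      rw [Function.onFun, Finset.disjoint_left]
      rintro c hc1' hc2'
      simp only [mem_image] at hc1' hc2'
      obtain ⟨_, _, rfl⟩ := hc1'
      obtain ⟨_, _, h⟩ := hc2'
      simp only [Prod.mk.injEq] at h
      exact hxy h.1.1.symm
  have e2 : ((range (n+1)).biUnion fun k =>
      (range (k+1)).image fun j => ((n-1+k, true), (n-1+j, true))).card
      = ∑ k ∈ range (n+1), (k + 1) := by
    rw [Finset.card_biUnion]
    · refine Finset.sum_congr rfl fun k _ => ?_
      rw [Finset.card_image_of_injective _ (fun x y h => by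
        simp only [Prod.mk.injEq] at h; omega), Finset.card_range]
    · intro x _ y _ hxy
      rw [Function.onFun, Finset.disjoint_left]
      rintro c hc1' hc2'
      simp only [mem_image] at hc1' hc2'
      obtain ⟨_, _, rfl⟩ := hc1'
      obtain ⟨_, _, h⟩ := hc2'
      simp only [Prod.mk.injEq] at h
      omega
  have e3 : ((range (n+1)).biUnion fun k =>
      (range (min (n-1+k) n + 1)).image fun a₂ => ((n-1+k, true), (a₂, false))).card
      = ∑ k ∈ range (n+1), (min (n-1+k) n + 1) := by
    rw [Finset.card_biUnion]
    · refine Finset.sum_congr rfl fun k _ => ?_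
      rw [Finset.card_image_of_injective _ (fun x y h => by simpa using h),
        Finset.card_range]
    · intro x _ y _ hxy
      rw [Function.onFun, Finset.disjoint_left]
      rintro c hc1' hc2'
      simp only [mem_image] at hc1' hc2'
      obtain ⟨_, _, rfl⟩ := hc1'
      obtain ⟨_, _, h⟩ := hc2'
      simp only [Prod.mk.injEq] at h
      omega
  rw [CP, Finset.card_union_of_disjoint hdisj2, Finset.card_union_of_disjoint hdisj1,
    e1, e2, e3]
  have h3 : ∑ k ∈ range (n+1), (min (n-1+k) n + 1) = n * (n + 1) + n := by
    rw [Finset.sum_range_succ']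
    have hcongr : ∀ i ∈ range n, (min (n-1+(i+1)) n + 1) = n + 1 := by
      intro i _
      have : min (n-1+(i+1)) n = n := by omega
      rw [this]
    rw [Finset.sum_congr rfl hcongr, Finset.sum_const, Finset.card_range, smul_eq_mul]
    have : min (n-1+0) n = n - 1 := by omega
    rw [this]
    omega
  rw [h3]
  set S := ∑ a ∈ range (n+1), (a+1) with hS
  have hg : 2 * S = (n+1) * (n+2) := by
    rw [hS, gauss]
  apply Nat.eq_of_mul_eq_mul_left (show 0 < 2 by norm_num)
  calc 2 * (S + S + (n * (n+1) + n))
      = 2 * S + 2 * S + 2 * (n * (n+1) + n) := by ring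
    _ = (n+1) * (n+2) + (n+1) * (n+2) + 2 * (n * (n+1) + n) := by rw [hg]
    _ = 2 * ((n + 2) * (2 * n + 1)) := by ring

end Stmt9Aux

open Stmt9Aux in
/-- The poset `[2] × K_{n-1}` has exactly `(n+2)(2n+1)` lower sets. -/
theorem stmt9 (n : ℕ) (hn : 2 ≤ n) :
    Set.ncard {I : Set (Fin 2 × KType n) | IsLowerSet I} = (n + 2) * (2 * n + 1) := by
  have hset : {I : Set (Fin 2 × KType n) | IsLowerSet I} =
      (fun c : (ℕ × Bool) × (ℕ × Bool) => pairSet (decodeK n c.1) (decodeK n c.2)) ''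
        ↑(CP n) := by
    ext I
    simp only [Set.mem_setOf_eq, Set.mem_image, Finset.mem_coe]
    constructor
    · intro hI
      obtain ⟨I₁, I₂, h₁, h₂, hsub, rfl⟩ := lower2_decomp hI
      obtain ⟨c₁, hc₁, rfl⟩ := classifyK hn h₁
      obtain ⟨c₂, hc₂, rfl⟩ := classifyK hn h₂
      have hle := (decodeK_subset_iff hn hc₂ hc₁).1 hsub
      exact ⟨(c₁, c₂), (mem_CP hn _).2 ⟨hc₁, hc₂, hle.1, hle.2⟩, rfl⟩
    · rintro ⟨c, hc, rfl⟩
      have hg := (mem_CP hn _).1 hc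
      exact pairSet_lower (decodeK_lower hn hg.1) (decodeK_lower hn hg.2.1)
        (decodeK_mono hg.2.2.1 hg.2.2.2)
  have hinj : Set.InjOn
      (fun c : (ℕ × Bool) × (ℕ × Bool) => pairSet (decodeK n c.1) (decodeK n c.2))
      ↑(CP n) := by
    intro c hc c' hc' h
    simp only [Finset.mem_coe] at hc hc'
    have hg := (mem_CP hn _).1 hc
    have hg' := (mem_CP hn _).1 hc'
    obtain ⟨h1, h2⟩ := pairSet_inj h
    exact Prod.ext (decodeK_injOn hn hg.1 hg'.1 h1) (decodeK_injOn hn hg.2.1 hg'.2.1 h2)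
  rw [hset, Set.ncard_image_of_injOn hinj, Set.ncard_coe_finset, card_CP hn]
end
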